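/- For every integer n ≥ 4, the line graph L(K_n) of the complete graph K_n satisfies mob(L(K_n)) = n − 2. -/
import Mathlib


/-- `S` is a general position set of `G`: no three distinct vertices of `S`
lie on a common shortest path. -/
def IsGPSet {V : Type*} (G : SimpleGraph V) (S : Finset V) : Prop :=
  ∀ x ∈ S, ∀ y ∈ S, ∀ z ∈ S, x ≠ y → y ≠ z → x ≠ z →
    G.dist x y + G.dist y z ≠ G.dist x z

/-- A legal move: one robot moves from an occupied vertex `u` to an adjacent
unoccupied vertex `v` so that the new set of occupied vertices is again in
general position. -/
def LegalMove {V : Type*} [DecidableEq V] (G : SimpleGraph V) (S T : Finset V) : Prop :=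
  ∃ u ∈ S, ∃ v, v ∉ S ∧ G.Adj u v ∧ T = insert v (S.erase u) ∧ IsGPSet G T

/-- `S` is a mobile general position set of `G`: `S` is in general position and
there is a finite sequence of legal moves starting from `S` after which every
vertex of `G` has been occupied at some stage. -/
def IsMobileGPSet {V : Type*} [DecidableEq V] (G : SimpleGraph V) (S : Finset V) : Prop :=
  IsGPSet G S ∧ ∃ (m : ℕ) (f : ℕ → Finset V), f 0 = S ∧
    (∀ i < m, LegalMove G (f i) (f (i + 1))) ∧
    ∀ v : V, ∃ i ≤ m, v ∈ f i

/-- The mobile general position number of `G`. -/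
noncomputable def mob {V : Type*} [DecidableEq V] (G : SimpleGraph V) : ℕ :=
  sSup {n | ∃ S : Finset V, IsMobileGPSet G S ∧ S.card = n}

/-- The general position number of `G`. -/
noncomputable def gpNum {V : Type*} (G : SimpleGraph V) : ℕ :=
  sSup {n | ∃ S : Finset V, IsGPSet G S ∧ S.card = n}

namespace GPAux

open SimpleGraph Finset
open scoped Classical

variable {n : ℕ}

abbrev K (n : ℕ) : SimpleGraph (Fin n) := ⊤
abbrev EV (n : ℕ) : Type := ((K n).edgeSet : Set (Sym2 (Fin n)))
abbrev LG (n : ℕ) : SimpleGraph (EV n) := (K n).lineGraph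

def sh (x y : Sym2 (Fin n)) : Prop := ∃ w, w ∈ x ∧ w ∈ y

lemma sh_symm {x y : Sym2 (Fin n)} (h : sh x y) : sh y x := by
  obtain ⟨w, h1, h2⟩ := h; exact ⟨w, h2, h1⟩

lemma sh_self (x : Sym2 (Fin n)) : sh x x := by
  induction x using Sym2.ind with
  | _ a b => exact ⟨a, by simp, by simp⟩

lemma sh_mk {a b c d : Fin n} :
    sh s(a,b) s(c,d) ↔ (a = c ∨ a = d ∨ b = c ∨ b = d) := by
  constructor
  · rintro ⟨w, hw1, hw2⟩
    rw [Sym2.mem_iff] at hw1 hw2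
    rcases hw1 with rfl | rfl <;> tauto
  · rintro (rfl | rfl | rfl | rfl)
    · exact ⟨a, by simp, by simp⟩
    · exact ⟨a, by simp, by simp⟩
    · exact ⟨b, by simp, by simp⟩
    · exact ⟨b, by simp, by simp⟩

lemma mem_ev (e : Sym2 (Fin n)) : e ∈ (K n).edgeSet ↔ ¬ e.IsDiag := by
  rw [edgeSet_top]; rfl

def mkE (a b : Fin n) (h : a ≠ b) : EV n :=
  ⟨s(a,b), (mem_ev _).mpr (by simpa using h)⟩

@[simp] lemma mkE_val (a b : Fin n) (h : a ≠ b) : (mkE a b h : Sym2 (Fin n)) = s(a,b) := rfl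

lemma ev_nondiag (x : EV n) : ¬ (x : Sym2 (Fin n)).IsDiag :=
  (mem_ev _).mp x.2

lemma ev_rep (x : EV n) : ∃ a b : Fin n, a ≠ b ∧ (x : Sym2 (Fin n)) = s(a,b) := by
  obtain ⟨e, he⟩ := x
  induction e using Sym2.ind with
  | _ a b =>
    refine ⟨a, b, ?_, rfl⟩
    have := (mem_ev (n := n) s(a,b)).mp he
    simpa using this

lemma eq_of_two_mem {x : Sym2 (Fin n)} {a b : Fin n} (hab : a ≠ b)
    (ha : a ∈ x) (hb : b ∈ x) : x = s(a,b) := by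
  induction x using Sym2.ind with
  | _ c d =>
    rw [Sym2.mem_iff] at ha hb
    rcases ha with rfl | rfl <;> rcases hb with rfl | rfl <;>
      first | (exact absurd rfl hab) | rfl | exact Sym2.eq_swap

lemma other_rep {x : EV n} {a : Fin n} (ha : a ∈ (x : Sym2 (Fin n))) :
    ∃ b : Fin n, b ≠ a ∧ (x : Sym2 (Fin n)) = s(a,b) := by
  obtain ⟨c, d, hcd, hx⟩ := ev_rep x
  rw [hx, Sym2.mem_iff] at ha
  rcases ha with rfl | rfl
  · exact ⟨d, fun h => hcd h.symm, hx⟩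
  · exact ⟨c, fun h => hcd h, by rw [hx]; exact Sym2.eq_swap⟩

lemma lg_adj {x y : EV n} : (LG n).Adj x y ↔ x ≠ y ∧ sh x.1 y.1 := by
  rw [lineGraph_adj_iff_exists]; rfl

lemma dist_one {x y : EV n} (hne : x ≠ y) (hsh : sh x.1 y.1) : (LG n).dist x y = 1 :=
  dist_eq_one_iff_adj.mpr (lg_adj.mpr ⟨hne, hsh⟩)

lemma dist_two {x y : EV n} (hsh : ¬ sh x.1 y.1) : (LG n).dist x y = 2 := by
  obtain ⟨a, b, hab, hx⟩ := ev_rep x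
  obtain ⟨c, d, hcd, hy⟩ := ev_rep y
  have hbc : b ≠ c := by
    intro h; exact hsh ⟨b, by rw [hx]; simp, by rw [hy, h]; simp⟩
  have hxy : x ≠ y := by
    intro h; exact hsh (h ▸ sh_self x.1)
  have hadj1 : (LG n).Adj x (mkE b c hbc) := by
    rw [lg_adj]
    constructor
    · intro h
      have hv : (x : Sym2 (Fin n)) = s(b,c) := by rw [h]; rfl
      rw [hx, Sym2.eq_iff] at hv
      rcases hv with ⟨h1, h2⟩ | ⟨h1, h2⟩
      · exact hab h1
      · exact hsh ⟨a, by rw [hx]; simp, by rw [hy, h1]; simp⟩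
    · exact ⟨b, by rw [hx]; simp, by simp [mkE]⟩
  have hadj2 : (LG n).Adj (mkE b c hbc) y := by
    rw [lg_adj]
    constructor
    · intro h
      have hv : s(b,c) = (y : Sym2 (Fin n)) := by rw [← h]; rfl
      rw [hy, Sym2.eq_iff] at hv
      rcases hv with ⟨h1, h2⟩ | ⟨h1, h2⟩
      · exact hbc h1
      · exact hsh ⟨b, by rw [hx]; simp, by rw [hy, h1]; simp⟩
    · exact ⟨c, by simp [mkE], by rw [hy]; simp⟩
  have hw : (LG n).dist x y ≤ 2 := by
    have := SimpleGraph.dist_le ((hadj1.toWalk.append hadj2.toWalk))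
    simpa using this
  have h0 : (LG n).dist x y ≠ 0 := by
    have hreach : (LG n).Reachable x y := ⟨hadj1.toWalk.append hadj2.toWalk⟩
    have := hreach.pos_dist_of_ne hxy
    omega
  have h1 : (LG n).dist x y ≠ 1 := by
    intro h
    rw [dist_eq_one_iff_adj, lg_adj] at h
    exact hsh h.2
  omega

/-- Characterization of general position sets in the line graph. -/
lemma gp_iff {S : Finset (EV n)} :
    IsGPSet (LG n) S ↔ ∀ x ∈ S, ∀ y ∈ S, ∀ z ∈ S, x ≠ y → y ≠ z → x ≠ z →
      sh x.1 y.1 → sh y.1 z.1 → sh x.1 z.1 := by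
  constructor
  · intro h x hx y hy z hz hxy hyz hxz h1 h2
    by_contra h3
    exact h x hx y hy z hz hxy hyz hxz
      (by rw [dist_one hxy h1, dist_one hyz h2, dist_two h3])
  · intro h x hx y hy z hz hxy hyz hxz
    by_cases h1 : sh x.1 y.1 <;> by_cases h2 : sh y.1 z.1
    · have h3 := h x hx y hy z hz hxy hyz hxz h1 h2
      rw [dist_one hxy h1, dist_one hyz h2, dist_one hxz h3]; omega
    · rw [dist_one hxy h1, dist_two h2]
      rcases Classical.em (sh x.1 z.1) with h3 | h3
      · rw [dist_one hxz h3]; omega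
      · rw [dist_two h3]; omega
    · rw [dist_two h1, dist_one hyz h2]
      rcases Classical.em (sh x.1 z.1) with h3 | h3
      · rw [dist_one hxz h3]; omega
      · rw [dist_two h3]; omega
    · rw [dist_two h1, dist_two h2]
      rcases Classical.em (sh x.1 z.1) with h3 | h3
      · rw [dist_one hxz h3]; omega
      · rw [dist_two h3]; omega

/-- Full transitivity of `sh` on a general position set (no distinctness needed). -/
lemma gp_trans {S : Finset (EV n)} (h : IsGPSet (LG n) S) :
    ∀ x ∈ S, ∀ y ∈ S, ∀ z ∈ S, sh x.1 y.1 → sh y.1 z.1 → sh x.1 z.1 := by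
  intro x hx y hy z hz h1 h2
  by_cases hxy : x = y
  · subst hxy; exact h2
  by_cases hyz : y = z
  · subst hyz; exact h1
  by_cases hxz : x = z
  · subst hxz; exact sh_self _
  exact gp_iff.mp h x hx y hy z hz hxy hyz hxz h1 h2


/-- Helly-type classification: the `sh`-class of `u` in `E` is a star or a triangle. -/
lemma helly {E : Finset (EV n)}
    (hT : ∀ x ∈ E, ∀ y ∈ E, ∀ z ∈ E, sh x.1 y.1 → sh y.1 z.1 → sh x.1 z.1)
    {u : EV n} (hu : u ∈ E) :
    (∃ c0 : Fin n, ∀ f ∈ E, sh u.1 f.1 → c0 ∈ (f : Sym2 (Fin n))) ∨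
    (∃ a b c : Fin n, a ≠ b ∧ a ≠ c ∧ b ≠ c ∧ (u : Sym2 (Fin n)) = s(a,b) ∧
      (∃ f ∈ E, (f : Sym2 (Fin n)) = s(b,c)) ∧ (∃ g ∈ E, (g : Sym2 (Fin n)) = s(a,c)) ∧
      (∀ f ∈ E, sh u.1 f.1 →
        (f : Sym2 (Fin n)) = s(a,b) ∨ (f : Sym2 (Fin n)) = s(b,c) ∨
          (f : Sym2 (Fin n)) = s(a,c))) := by
  obtain ⟨a0, b0, hab, hrep⟩ := ev_rep u
  by_cases hca : ∀ f ∈ E, sh u.1 f.1 → a0 ∈ (f : Sym2 (Fin n))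
  · exact Or.inl ⟨a0, hca⟩
  by_cases hcb : ∀ f ∈ E, sh u.1 f.1 → b0 ∈ (f : Sym2 (Fin n))
  · exact Or.inl ⟨b0, hcb⟩
  push_neg at hca hcb
  obtain ⟨fa, hfa, hsha, hafa⟩ := hca
  obtain ⟨fb, hfb, hshb, hbfb⟩ := hcb
  have hbfa : b0 ∈ (fa : Sym2 (Fin n)) := by
    obtain ⟨w, hw1, hw2⟩ := hsha
    rw [hrep, Sym2.mem_iff] at hw1
    rcases hw1 with rfl | rfl
    · exact absurd hw2 hafa
    · exact hw2
  have hafb : a0 ∈ (fb : Sym2 (Fin n)) := by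
    obtain ⟨w, hw1, hw2⟩ := hshb
    rw [hrep, Sym2.mem_iff] at hw1
    rcases hw1 with rfl | rfl
    · exact hw2
    · exact absurd hw2 hbfb
  obtain ⟨c, hc, hfarep⟩ := other_rep hbfa
  obtain ⟨d, hd, hfbrep⟩ := other_rep hafb
  have hca0 : c ≠ a0 := by rintro rfl; rw [hfarep] at hafa; simp at hafa
  have hdb0 : d ≠ b0 := by rintro rfl; rw [hfbrep] at hbfb; simp at hbfb
  have hshab : sh fa.1 fb.1 := hT fa hfa u hu fb hfb (sh_symm hsha) hshb
  have hcd : c = d := by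
    rw [hfarep, hfbrep, sh_mk] at hshab
    rcases hshab with h | h | h | h
    · exact absurd h.symm hab
    · exact absurd h.symm hdb0
    · exact absurd h hca0
    · exact h
  subst hcd
  refine Or.inr ⟨a0, b0, c, hab, Ne.symm hca0, Ne.symm hc, hrep,
    ⟨fa, hfa, hfarep⟩, ⟨fb, hfb, hfbrep⟩, ?_⟩
  intro f hf hshf
  obtain ⟨p, hp1, hp2⟩ := hshf
  rw [hrep, Sym2.mem_iff] at hp1
  rcases hp1 with rfl | rfl
  · obtain ⟨q, hq, hfrep⟩ := other_rep hp2
    by_cases hqb : q = b0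
    · left; rw [hfrep, hqb]
    by_cases hqc : q = c
    · right; right; rw [hfrep, hqc]
    have : sh f.1 fa.1 := hT f hf u hu fa hfa (sh_symm ⟨p, by rw [hrep]; simp, by rw [hfrep]; simp⟩) hsha
    rw [hfrep, hfarep, sh_mk] at this
    rcases this with h | h | h | h
    · exact absurd h hab
    · exact absurd h (Ne.symm hca0)
    · exact absurd h hqb
    · exact absurd h hqc
  · obtain ⟨q, hq, hfrep⟩ := other_rep hp2
    by_cases hqa : q = a0
    · left; rw [hfrep, hqa]; exact Sym2.eq_swap
    by_cases hqc : q = c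
    · right; left; rw [hfrep, hqc]
    have : sh f.1 fb.1 := hT f hf u hu fb hfb (sh_symm ⟨p, by rw [hrep]; simp, by rw [hfrep]; simp⟩) hshb
    rw [hfrep, hfbrep, sh_mk] at this
    rcases this with h | h | h | h
    · exact absurd h.symm hab
    · exact absurd h (Ne.symm hc)
    · exact absurd h hqa
    · exact absurd h hqc

noncomputable def pick (hn : 0 < n) (X : Finset (Fin n)) : Fin n :=
  if h : X.Nonempty then X.min' h else ⟨0, hn⟩

lemma pick_mem (hn : 0 < n) {X : Finset (Fin n)} (h : X.Nonempty) : pick hn X ∈ X := by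
  rw [pick, dif_pos h]; exact X.min'_mem h

noncomputable def comm (E : Finset (EV n)) (e : EV n) : Finset (Fin n) :=
  univ.filter (fun w => ∀ f ∈ E, sh e.1 f.1 → w ∈ (f : Sym2 (Fin n)))

noncomputable def suppC (E : Finset (EV n)) (e : EV n) : Finset (Fin n) :=
  univ.filter (fun w => ∃ f ∈ E, sh e.1 f.1 ∧ w ∈ (f : Sym2 (Fin n)))

noncomputable def everts (e : EV n) : Finset (Fin n) :=
  univ.filter (fun w => w ∈ (e : Sym2 (Fin n)))

noncomputable def psi (hn : 0 < n) (E : Finset (EV n)) (W : Finset (Fin n)) (e : EV n) :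
    Fin n :=
  if (comm E e).card = 0 then pick hn (suppC E e \ everts e)
  else if (comm E e).card = 1 then pick hn (everts e \ comm E e)
  else pick hn (everts e \ W)

lemma mem_everts {w : Fin n} {e : EV n} : w ∈ everts e ↔ w ∈ (e : Sym2 (Fin n)) := by
  simp [everts]

lemma mem_comm {E : Finset (EV n)} {w : Fin n} {e : EV n} :
    w ∈ comm E e ↔ ∀ f ∈ E, sh e.1 f.1 → w ∈ (f : Sym2 (Fin n)) := by
  simp [comm]

lemma mem_suppC {E : Finset (EV n)} {w : Fin n} {e : EV n} :
    w ∈ suppC E e ↔ ∃ f ∈ E, sh e.1 f.1 ∧ w ∈ (f : Sym2 (Fin n)) := by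
  simp [suppC]

lemma star_comm {E : Finset (EV n)} {e : EV n} (he : e ∈ E) {c0 d : Fin n}
    (hstar : ∀ f ∈ E, sh e.1 f.1 → c0 ∈ (f : Sym2 (Fin n)))
    (hev : (e : Sym2 (Fin n)) = s(c0,d)) (hd : d ≠ c0) (hdc : d ∉ comm E e) :
    comm E e = {c0} := by
  apply Finset.Subset.antisymm
  · intro w hw
    have hwe : w ∈ (e : Sym2 (Fin n)) := mem_comm.mp hw e he (sh_self _)
    rw [hev, Sym2.mem_iff] at hwe
    rcases hwe with rfl | rfl
    · exact mem_singleton_self _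
    · exact absurd hw hdc
  · intro w hw
    rw [mem_singleton] at hw
    subst hw
    exact mem_comm.mpr hstar

lemma psi_star (hn : 0 < n) {E : Finset (EV n)} {W : Finset (Fin n)} {e : EV n}
    {c0 d : Fin n} (hcomm : comm E e = {c0})
    (hev : (e : Sym2 (Fin n)) = s(c0,d)) (hd : d ≠ c0) :
    psi hn E W e = d := by
  have h1 : (comm E e).card = 1 := by rw [hcomm]; simp
  have hset : everts e \ comm E e = {d} := by
    rw [hcomm]
    ext w
    simp only [mem_sdiff, mem_everts, mem_singleton, hev, Sym2.mem_iff]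
    constructor
    · rintro ⟨rfl | rfl, hw⟩
      · exact absurd rfl hw
      · rfl
    · rintro rfl
      exact ⟨Or.inr rfl, hd⟩
  simp only [psi, if_neg (by omega : ¬ (comm E e).card = 0), if_pos h1, hset]
  have := pick_mem hn (Finset.singleton_nonempty d)
  simpa using this

lemma tri_comm {E : Finset (EV n)} {e : EV n} (he : e ∈ E)
    {a b c : Fin n} (hab : a ≠ b) (hac : a ≠ c) (hbc : b ≠ c)
    (hrep : (e : Sym2 (Fin n)) = s(a,b))
    (hf1 : ∃ f ∈ E, (f : Sym2 (Fin n)) = s(b,c))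
    (hf2 : ∃ g ∈ E, (g : Sym2 (Fin n)) = s(a,c)) :
    comm E e = ∅ := by
  obtain ⟨f1, hf1m, hf1v⟩ := hf1
  obtain ⟨f2, hf2m, hf2v⟩ := hf2
  rw [eq_empty_iff_forall_notMem]
  intro w hw
  have hwe : w ∈ (e : Sym2 (Fin n)) := mem_comm.mp hw e he (sh_self _)
  rw [hrep, Sym2.mem_iff] at hwe
  rcases hwe with rfl | rfl
  · have := mem_comm.mp hw f1 hf1m ⟨b, by rw [hrep]; simp, by rw [hf1v]; simp⟩
    rw [hf1v, Sym2.mem_iff] at this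
    rcases this with h | h
    · exact hab h
    · exact hac h
  · have := mem_comm.mp hw f2 hf2m ⟨a, by rw [hrep]; simp, by rw [hf2v]; simp⟩
    rw [hf2v, Sym2.mem_iff] at this
    rcases this with h | h
    · exact hab h.symm
    · exact hbc h

lemma tri_suppC {E : Finset (EV n)} {e : EV n} (he : e ∈ E)
    {a b c : Fin n}
    (hrep : (e : Sym2 (Fin n)) = s(a,b))
    (hf1 : ∃ f ∈ E, (f : Sym2 (Fin n)) = s(b,c))
    (hcls : ∀ f ∈ E, sh e.1 f.1 →
      (f : Sym2 (Fin n)) = s(a,b) ∨ (f : Sym2 (Fin n)) = s(b,c) ∨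
        (f : Sym2 (Fin n)) = s(a,c)) :
    suppC E e = {a, b, c} := by
  obtain ⟨f1, hf1m, hf1v⟩ := hf1
  ext w
  simp only [mem_suppC, mem_insert, mem_singleton]
  constructor
  · rintro ⟨f, hf, hshf, hwf⟩
    rcases hcls f hf hshf with hv | hv | hv <;> rw [hv, Sym2.mem_iff] at hwf <;> tauto
  · rintro (rfl | rfl | rfl)
    · exact ⟨e, he, sh_self _, by rw [hrep]; simp⟩
    · exact ⟨e, he, sh_self _, by rw [hrep]; simp⟩
    · exact ⟨f1, hf1m, ⟨b, by rw [hrep]; simp, by rw [hf1v]; simp⟩, by rw [hf1v]; simp⟩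

lemma psi_tri (hn : 0 < n) {E : Finset (EV n)} {W : Finset (Fin n)} {e : EV n} (he : e ∈ E)
    {a b c : Fin n} (hab : a ≠ b) (hac : a ≠ c) (hbc : b ≠ c)
    (hrep : (e : Sym2 (Fin n)) = s(a,b))
    (hf1 : ∃ f ∈ E, (f : Sym2 (Fin n)) = s(b,c))
    (hf2 : ∃ g ∈ E, (g : Sym2 (Fin n)) = s(a,c))
    (hcls : ∀ f ∈ E, sh e.1 f.1 →
      (f : Sym2 (Fin n)) = s(a,b) ∨ (f : Sym2 (Fin n)) = s(b,c) ∨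
        (f : Sym2 (Fin n)) = s(a,c)) :
    psi hn E W e = c := by
  have hcomm0 := tri_comm he hab hac hbc hrep hf1 hf2
  have hsuppeq := tri_suppC he hrep hf1 hcls
  have hset : suppC E e \ everts e = {c} := by
    rw [hsuppeq]
    ext w
    simp only [mem_sdiff, mem_insert, mem_singleton, mem_everts, hrep, Sym2.mem_iff]
    constructor
    · rintro ⟨rfl | rfl | rfl, hw⟩
      · exact absurd (Or.inl rfl) hw
      · exact absurd (Or.inr rfl) hw
      · rfl
    · rintro rfl
      refine ⟨Or.inr (Or.inr rfl), ?_⟩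
      rintro (rfl | rfl)
      · exact hac rfl
      · exact hbc rfl
  simp only [psi, if_pos (by rw [hcomm0]; simp : (comm E e).card = 0), hset]
  have := pick_mem hn (Finset.singleton_nonempty c)
  simpa using this

lemma psi_spec (hn : 0 < n) {E : Finset (EV n)}
    (hT : ∀ x ∈ E, ∀ y ∈ E, ∀ z ∈ E, sh x.1 y.1 → sh y.1 z.1 → sh x.1 z.1)
    {W : Finset (Fin n)}
    (h1 : ∀ w ∈ W, ∀ e ∈ E, w ∈ (e : Sym2 (Fin n)) →
      ∀ f ∈ E, sh e.1 f.1 → w ∈ (f : Sym2 (Fin n)))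
    (h2 : ∀ w ∈ W, ∀ w' ∈ W, w ≠ w' → ∀ e ∈ E,
      ¬(w ∈ (e : Sym2 (Fin n)) ∧ w' ∈ (e : Sym2 (Fin n))))
    {e : EV n} (he : e ∈ E) :
    psi hn E W e ∈ suppC E e ∧ psi hn E W e ∉ W := by
  have hsupp_self : ∀ w, w ∈ (e : Sym2 (Fin n)) → w ∈ suppC E e := by
    intro w hw; exact mem_suppC.mpr ⟨e, he, sh_self _, hw⟩
  rcases helly hT he with ⟨c0, hstar⟩ |
    ⟨a, b, c, hab, hac, hbc, hrep, hf1, hf2, hcls⟩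
  · have hc0e : c0 ∈ (e : Sym2 (Fin n)) := hstar e he (sh_self _)
    obtain ⟨d, hd, hev⟩ := other_rep hc0e
    have hc0comm : c0 ∈ comm E e := mem_comm.mpr hstar
    by_cases hdc : d ∈ comm E e
    · have hcard : 2 ≤ (comm E e).card := by
        have hsub : ({c0, d} : Finset (Fin n)) ⊆ comm E e := by
          intro w hw
          rcases mem_insert.mp hw with rfl | hw
          · exact hc0comm
          · rw [mem_singleton] at hw; exact hw ▸ hdc
        have h2' := card_le_card hsub
        rwa [card_pair (Ne.symm hd)] at h2'
      simp only [psi, if_neg (by omega : ¬ (comm E e).card = 0),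
        if_neg (by omega : ¬ (comm E e).card = 1)]
      have hne : (everts e \ W).Nonempty := by
        by_cases hcw : c0 ∈ W
        · refine ⟨d, mem_sdiff.mpr ⟨mem_everts.mpr (by rw [hev]; simp), ?_⟩⟩
          intro hdw
          exact h2 c0 hcw d hdw (Ne.symm hd) e he ⟨hc0e, by rw [hev]; simp⟩
        · exact ⟨c0, mem_sdiff.mpr ⟨mem_everts.mpr hc0e, hcw⟩⟩
      have hp := pick_mem hn hne
      rw [mem_sdiff] at hp
      exact ⟨hsupp_self _ (mem_everts.mp hp.1), hp.2⟩
    · have hcomm := star_comm he hstar hev hd hdc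
      rw [psi_star hn hcomm hev hd]
      refine ⟨hsupp_self d (by rw [hev]; simp), ?_⟩
      intro hdW
      exact hdc (mem_comm.mpr (h1 d hdW e he (by rw [hev]; simp)))
  · rw [psi_tri hn he hab hac hbc hrep hf1 hf2 hcls]
    obtain ⟨f1, hf1m, hf1v⟩ := hf1
    constructor
    · rw [tri_suppC he hrep ⟨f1, hf1m, hf1v⟩ hcls]; simp
    · intro hcW
      have := h1 c hcW f1 hf1m (by rw [hf1v]; simp) e he
        (sh_symm ⟨b, by rw [hrep]; simp, by rw [hf1v]; simp⟩)
      rw [hrep, Sym2.mem_iff] at this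
      rcases this with h | h
      · exact hac h.symm
      · exact hbc h.symm

lemma psi_inj (hn : 0 < n) {E : Finset (EV n)}
    (hT : ∀ x ∈ E, ∀ y ∈ E, ∀ z ∈ E, sh x.1 y.1 → sh y.1 z.1 → sh x.1 z.1)
    {W : Finset (Fin n)}
    (h1 : ∀ w ∈ W, ∀ e ∈ E, w ∈ (e : Sym2 (Fin n)) →
      ∀ f ∈ E, sh e.1 f.1 → w ∈ (f : Sym2 (Fin n)))
    (h2 : ∀ w ∈ W, ∀ w' ∈ W, w ≠ w' → ∀ e ∈ E,
      ¬(w ∈ (e : Sym2 (Fin n)) ∧ w' ∈ (e : Sym2 (Fin n))))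
    {e f : EV n} (he : e ∈ E) (hf : f ∈ E) (hef : e ≠ f) :
    psi hn E W e ≠ psi hn E W f := by
  by_cases hsh : sh e.1 f.1
  · have hGg : ∀ g ∈ E, (sh e.1 g.1 ↔ sh f.1 g.1) := fun g hg =>
      ⟨fun h => hT f hf e he g hg (sh_symm hsh) h, fun h => hT e he f hf g hg hsh h⟩
    have hcomm_eq : comm E f = comm E e := by
      unfold comm
      apply filter_congr
      intro w _
      constructor
      · intro hw g hg hsg; exact hw g hg ((hGg g hg).mp hsg)
      · intro hw g hg hsg; exact hw g hg ((hGg g hg).mpr hsg)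
    rcases helly hT he with ⟨c0, hstar⟩ |
      ⟨a, b, c, hab, hac, hbc, hrep, hh1, hh2, hcls⟩
    · have hc0e := hstar e he (sh_self _)
      have hc0f := hstar f hf hsh
      obtain ⟨d, hd, hev⟩ := other_rep hc0e
      obtain ⟨d', hd', hfv⟩ := other_rep hc0f
      have hdd' : d ≠ d' := by
        rintro rfl
        exact hef (Subtype.ext (by rw [hev, hfv]))
      have hdc : d ∉ comm E e := by
        intro hdcomm
        have := mem_comm.mp hdcomm f hf hsh
        rw [hfv, Sym2.mem_iff] at this
        rcases this with h | h
        · exact hd h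
        · exact hdd' h
      have hcomm := star_comm he hstar hev hd hdc
      have hcommf : comm E f = {c0} := by rw [hcomm_eq, hcomm]
      rw [psi_star hn hcomm hev hd, psi_star hn hcommf hfv hd']
      exact hdd'
    · rw [psi_tri hn he hab hac hbc hrep hh1 hh2 hcls]
      have hfval := hcls f hf hsh
      have hclsf : ∀ g ∈ E, sh f.1 g.1 →
          (g : Sym2 (Fin n)) = s(a,b) ∨ (g : Sym2 (Fin n)) = s(b,c) ∨
            (g : Sym2 (Fin n)) = s(a,c) := by
        intro g hg hsg
        exact hcls g hg (hT e he f hf g hg hsh hsg)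
      rcases hfval with hv | hv | hv
      · exact absurd (Subtype.ext (by rw [hrep, hv])) hef
      · -- f = s(b,c); triple for f : (b, c, a)
        have : psi hn E W f = a := by
          apply psi_tri hn hf hbc (Ne.symm hab) (Ne.symm hac) hv
          · obtain ⟨g, hg, hgv⟩ := hh2
            exact ⟨g, hg, by rw [hgv]; exact Sym2.eq_swap⟩
          · exact ⟨e, he, by rw [hrep]; exact Sym2.eq_swap⟩
          · intro g hg hsg
            rcases hclsf g hg hsg with h | h | h
            · right; right; rw [h]; exact Sym2.eq_swap
            · left; exact h
            · right; left; rw [h]; exact Sym2.eq_swap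
        rw [this]
        exact Ne.symm hac
      · -- f = s(a,c); triple for f : (a, c, b)
        have : psi hn E W f = b := by
          apply psi_tri hn hf hac hab (Ne.symm hbc) hv
          · obtain ⟨g, hg, hgv⟩ := hh1
            exact ⟨g, hg, by rw [hgv]; exact Sym2.eq_swap⟩
          · exact ⟨e, he, hrep⟩
          · intro g hg hsg
            rcases hclsf g hg hsg with h | h | h
            · right; right; exact h
            · right; left; rw [h]; exact Sym2.eq_swap
            · left; exact h
        rw [this]
        exact Ne.symm hbc
  · -- different classes: supports are disjoint
    intro hpsi
    have hpe := (psi_spec hn hT h1 h2 he).1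
    have hpf := (psi_spec hn hT h1 h2 hf).1
    rw [hpsi] at hpe
    obtain ⟨g1, hg1, hsg1, hw1⟩ := mem_suppC.mp hpe
    obtain ⟨g2, hg2, hsg2, hw2⟩ := mem_suppC.mp hpf
    have hs12 : sh g1.1 g2.1 := ⟨psi hn E W f, hw1, hw2⟩
    have : sh e.1 f.1 :=
      hT e he g2 hg2 f hf (hT e he g1 hg1 g2 hg2 hsg1 hs12) (sh_symm hsg2)
    exact hsh this

/-- The key counting lemma: a gp family plus a set of "inert" vertices fits inside `Fin n`. -/
lemma count (hn : 0 < n) {E : Finset (EV n)}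
    (hT : ∀ x ∈ E, ∀ y ∈ E, ∀ z ∈ E, sh x.1 y.1 → sh y.1 z.1 → sh x.1 z.1)
    {W : Finset (Fin n)}
    (h1 : ∀ w ∈ W, ∀ e ∈ E, w ∈ (e : Sym2 (Fin n)) →
      ∀ f ∈ E, sh e.1 f.1 → w ∈ (f : Sym2 (Fin n)))
    (h2 : ∀ w ∈ W, ∀ w' ∈ W, w ≠ w' → ∀ e ∈ E,
      ¬(w ∈ (e : Sym2 (Fin n)) ∧ w' ∈ (e : Sym2 (Fin n)))) :
    E.card + W.card ≤ n := by
  have hmaps : ∀ e ∈ E, psi hn E W e ∈ univ \ W := fun e he =>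
    mem_sdiff.mpr ⟨mem_univ _, (psi_spec hn hT h1 h2 he).2⟩
  have hinj : ∀ e ∈ E, ∀ f ∈ E, psi hn E W e = psi hn E W f → e = f := by
    intro e he f hf h
    by_contra hef
    exact psi_inj hn hT h1 h2 he hf hef h
  have hle := Finset.card_le_card_of_injOn _ hmaps hinj
  rw [card_sdiff_of_subset (subset_univ W), card_univ, Fintype.card_fin] at hle
  have hW : W.card ≤ n := by
    have := card_le_card (subset_univ W)
    rwa [card_univ, Fintype.card_fin] at this
  omega

/-- Core move lemma: a legal move from a gp set of size ≥ n-1 must be a "P3 rotation"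
inside a fixed triple of vertices, and the rest of the set consists of triangles
vertex-disjoint from that triple, covering all other vertices. -/
lemma core (hn : 4 ≤ n) {E E' : Finset (EV n)}
    (hgpE : IsGPSet (LG n) E) (hgpE' : IsGPSet (LG n) E')
    (hcard : n - 1 ≤ E.card)
    {u v : EV n} (hu : u ∈ E) (hv : v ∉ E) (hne : u ≠ v) (hshuv : sh u.1 v.1)
    (hE' : E' = insert v (E.erase u)) :
    ∃ a b c : Fin n, a ≠ b ∧ a ≠ c ∧ b ≠ c ∧
      (u : Sym2 (Fin n)) = s(a,b) ∧ (v : Sym2 (Fin n)) = s(b,c) ∧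
      (∃ e2 ∈ E, (e2 : Sym2 (Fin n)) = s(a,c)) ∧
      (∀ g ∈ E, (g : Sym2 (Fin n)) ≠ s(a,b) → (g : Sym2 (Fin n)) ≠ s(a,c) →
        ∀ w ∈ (g : Sym2 (Fin n)), w ≠ a ∧ w ≠ b ∧ w ≠ c) ∧
      (∀ y : Fin n, y ≠ a → y ≠ b → y ≠ c → ∃ g ∈ E, y ∈ (g : Sym2 (Fin n)) ∧
        ∀ w ∈ (g : Sym2 (Fin n)), w ≠ a ∧ w ≠ b ∧ w ≠ c) ∧
      (∀ g ∈ E, (∀ w ∈ (g : Sym2 (Fin n)), w ≠ a ∧ w ≠ b ∧ w ≠ c) →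
        ∃ p q r : Fin n, p ≠ q ∧ p ≠ r ∧ q ≠ r ∧ (g : Sym2 (Fin n)) = s(p,q) ∧
          (∃ t1 ∈ E, (t1 : Sym2 (Fin n)) = s(p,r)) ∧
          (∃ t2 ∈ E, (t2 : Sym2 (Fin n)) = s(q,r)) ∧
          (r ≠ a ∧ r ≠ b ∧ r ≠ c)) := by
  have hTE := gp_trans hgpE
  have hTE' := gp_trans hgpE'
  have hmemE' : ∀ g ∈ E, g ≠ u → g ∈ E' := fun g hg hgu => by
    rw [hE']; exact mem_insert_of_mem (mem_erase.mpr ⟨hgu, hg⟩)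
  have hvE' : v ∈ E' := by rw [hE']; exact mem_insert_self _ _
  have hvne : ∀ g ∈ E, (v : Sym2 (Fin n)) ≠ (g : Sym2 (Fin n)) := by
    intro g hg h
    exact hv (by rwa [show v = g from Subtype.ext h])
  rcases helly hTE hu with ⟨c0, hstar⟩ |
    ⟨a, b, c, hab, hac, hbc, hrep, ⟨f1, hf1, hf1v⟩, ⟨f2, hf2, hf2v⟩, hcls⟩
  swap
  · -- robot on a triangle: impossible
    exfalso
    obtain ⟨p, hpu, hpv⟩ := hshuv
    obtain ⟨x, hxp, hvrep⟩ := other_rep hpv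
    have hf1u : f1 ≠ u := by
      intro h
      rw [h, hrep] at hf1v
      rw [Sym2.eq_iff] at hf1v
      rcases hf1v with ⟨h1, h2⟩ | ⟨h1, h2⟩
      · exact hab h1
      · exact hac h1
    have hf2u : f2 ≠ u := by
      intro h
      rw [h, hrep] at hf2v
      rw [Sym2.eq_iff] at hf2v
      rcases hf2v with ⟨h1, h2⟩ | ⟨h1, h2⟩
      · exact hbc h2
      · exact hac h1
    rw [hrep, Sym2.mem_iff] at hpu
    rcases hpu with rfl | rfl
    · -- v = s(p, x) with u = s(p, b)
      have hxb : x ≠ b := by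
        rintro rfl
        exact hvne u hu (by rw [hvrep, hrep])
      have hxc : x ≠ c := by
        rintro rfl
        exact hvne f2 hf2 (by rw [hvrep, hf2v])
      have : sh v.1 f1.1 := hTE' v hvE' f2 (hmemE' f2 hf2 hf2u) f1 (hmemE' f1 hf1 hf1u)
        ⟨p, by rw [hvrep]; simp, by rw [hf2v]; simp⟩
        ⟨c, by rw [hf2v]; simp, by rw [hf1v]; simp⟩
      obtain ⟨w, hw1, hw2⟩ := this
      rw [hvrep, Sym2.mem_iff] at hw1
      rw [hf1v, Sym2.mem_iff] at hw2
      rcases hw1 with rfl | rfl <;> rcases hw2 with rfl | rfl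
      · exact hab rfl
      · exact hac rfl
      · exact hxb rfl
      · exact hxc rfl
    · -- v = s(p, x) with u = s(a, p)
      have hxa : x ≠ a := by
        rintro rfl
        exact hvne u hu (by rw [hvrep, hrep]; exact Sym2.eq_swap)
      have hxc : x ≠ c := by
        rintro rfl
        exact hvne f1 hf1 (by rw [hvrep, hf1v])
      have : sh v.1 f2.1 := hTE' v hvE' f1 (hmemE' f1 hf1 hf1u) f2 (hmemE' f2 hf2 hf2u)
        ⟨p, by rw [hvrep]; simp, by rw [hf1v]; simp⟩
        ⟨c, by rw [hf1v]; simp, by rw [hf2v]; simp⟩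
      obtain ⟨w, hw1, hw2⟩ := this
      rw [hvrep, Sym2.mem_iff] at hw1
      rw [hf2v, Sym2.mem_iff] at hw2
      rcases hw1 with rfl | rfl <;> rcases hw2 with rfl | rfl
      · exact hab rfl
      · exact hbc rfl
      · exact hxa rfl
      · exact hxc rfl
  -- star case
  have hc0u : c0 ∈ u.1 := hstar u hu (sh_self _)
  obtain ⟨l1, hl1, hurep⟩ := other_rep hc0u
  obtain ⟨p, hpu, hpv⟩ := hshuv
  obtain ⟨x, hxp, hvrep⟩ := other_rep hpv
  have hxu : x ∉ u.1 := by
    intro hxu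
    have : u.1 = s(p, x) := eq_of_two_mem (Ne.symm hxp) hpu hxu
    exact hne (Subtype.ext (by rw [this, hvrep]))
  have hxc0 : x ≠ c0 := by rintro rfl; exact hxu (by rw [hurep]; simp)
  have hxl1 : x ≠ l1 := by rintro rfl; exact hxu (by rw [hurep]; simp)
  have hpmem : p = c0 ∨ p = l1 := by rw [hurep, Sym2.mem_iff] at hpu; exact hpu
  have hstarW : ∀ w ∈ ({c0} : Finset (Fin n)), ∀ e ∈ E, w ∈ (e : Sym2 (Fin n)) →
      ∀ f ∈ E, sh e.1 f.1 → w ∈ (f : Sym2 (Fin n)) := by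
    intro w hw e he hwe f hf hsef
    rw [mem_singleton] at hw
    subst hw
    exact hstar f hf (hTE u hu e he f hf ⟨w, by rw [hurep]; simp, hwe⟩ hsef)
  by_cases hQ : ∃ f ∈ E, sh u.1 f.1 ∧ x ∈ (f : Sym2 (Fin n))
  · obtain ⟨f0, hf0, hshf0, hxf0⟩ := hQ
    have hc0f0 : c0 ∈ f0.1 := hstar f0 hf0 hshf0
    have hf0v : f0.1 = s(c0, x) := eq_of_two_mem (Ne.symm hxc0) hc0f0 hxf0
    have hf0u : f0 ≠ u := by
      intro h
      exact hxu (h ▸ hxf0)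
    have hpl1 : p = l1 := by
      rcases hpmem with rfl | rfl
      · exfalso
        apply hv
        have : v = f0 := Subtype.ext (by rw [hvrep, hf0v])
        rw [this]; exact hf0
      · rfl
    subst hpl1
    -- now u = s(c0, p), v = s(p, x)
    by_cases hS3 : ∃ g ∈ E, sh u.1 g.1 ∧ g ≠ u ∧ g ≠ f0
    · exfalso
      obtain ⟨g, hg, hshg, hgu, hgf0⟩ := hS3
      have hc0g : c0 ∈ g.1 := hstar g hg hshg
      obtain ⟨l3, hl3, hgrep⟩ := other_rep hc0g
      have hl3p : l3 ≠ p := by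
        rintro rfl; exact hgu (Subtype.ext (by rw [hgrep, hurep]))
      have hl3x : l3 ≠ x := by
        rintro rfl; exact hgf0 (Subtype.ext (by rw [hgrep, hf0v]))
      have : sh v.1 g.1 := hTE' v hvE' f0 (hmemE' f0 hf0 hf0u) g (hmemE' g hg hgu)
        ⟨x, by rw [hvrep]; simp, hxf0⟩ ⟨c0, hc0f0, hc0g⟩
      obtain ⟨w, hw1, hw2⟩ := this
      rw [hvrep, Sym2.mem_iff] at hw1
      rw [hgrep, Sym2.mem_iff] at hw2
      rcases hw1 with rfl | rfl <;> rcases hw2 with rfl | rfl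
      · exact hl1 rfl
      · exact hl3p rfl
      · exact hxc0 rfl
      · exact hl3x rfl
    · -- the P3 structure
      have hclsK : ∀ g ∈ E, sh u.1 g.1 → g = u ∨ g = f0 := by
        intro g hg hs
        by_cases h : g = u
        · exact Or.inl h
        · right
          by_contra h2
          exact hS3 ⟨g, hg, hs, h, h2⟩
      have hdisj : ∀ g ∈ E, (g : Sym2 (Fin n)) ≠ s(c0,p) → (g : Sym2 (Fin n)) ≠ s(c0,x) →
          ∀ w ∈ (g : Sym2 (Fin n)), w ≠ c0 ∧ w ≠ p ∧ w ≠ x := by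
        intro g hg hg1 hg2 w hwg
        refine ⟨?_, ?_, ?_⟩
        · intro hwc0
          rcases hclsK g hg ⟨c0, by rw [hurep]; simp, hwc0 ▸ hwg⟩ with rfl | rfl
          · exact hg1 hurep
          · exact hg2 hf0v
        · intro hwp
          rcases hclsK g hg ⟨p, by rw [hurep]; simp, hwp ▸ hwg⟩ with rfl | rfl
          · exact hg1 hurep
          · exact hg2 hf0v
        · intro hwx
          have hshug : sh u.1 g.1 :=
            hTE u hu f0 hf0 g hg hshf0 ⟨x, by rw [hf0v]; simp, hwx ▸ hwg⟩
          rcases hclsK g hg hshug with rfl | rfl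
          · exact hg1 hurep
          · exact hg2 hf0v
      have hcov : ∀ y : Fin n, y ≠ c0 → y ≠ p → y ≠ x → ∃ g ∈ E, y ∈ (g : Sym2 (Fin n)) ∧
          ∀ w ∈ (g : Sym2 (Fin n)), w ≠ c0 ∧ w ≠ p ∧ w ≠ x := by
        intro y hya hyb hyc
        by_cases hcovy : ∃ g ∈ E, y ∈ (g : Sym2 (Fin n))
        · obtain ⟨g, hg, hyg⟩ := hcovy
          refine ⟨g, hg, hyg, hdisj g hg ?_ ?_⟩
          · intro h
            rw [h, Sym2.mem_iff] at hyg
            rcases hyg with rfl | rfl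
            · exact hya rfl
            · exact hyb rfl
          · intro h
            rw [h, Sym2.mem_iff] at hyg
            rcases hyg with rfl | rfl
            · exact hya rfl
            · exact hyc rfl
        · exfalso
          push_neg at hcovy
          have hcnt := count (show 0 < n by omega) hTE (W := {c0, y}) ?_ ?_
          · rw [card_pair (Ne.symm hya)] at hcnt
            omega
          · intro w hw e he hwe f hf hsef
            rcases mem_insert.mp hw with rfl | hw
            · exact hstarW w (mem_singleton_self _) e he hwe f hf hsef
            · rw [mem_singleton] at hw
              subst hw
              exact absurd hwe (hcovy e he)
          · intro w hw w' hw' hww' e he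
            rintro ⟨hwe, hw'e⟩
            rcases mem_insert.mp hw with rfl | hw
            · rcases mem_insert.mp hw' with rfl | hw'
              · exact hww' rfl
              · rw [mem_singleton] at hw'
                subst hw'
                exact hcovy e he hw'e
            · rw [mem_singleton] at hw
              subst hw
              exact hcovy e he hwe
      refine ⟨c0, p, x, Ne.symm hl1, Ne.symm hxc0, Ne.symm hxl1, hurep, hvrep,
        ⟨f0, hf0, hf0v⟩, hdisj, hcov, ?_⟩
      intro g hg hdisjg
      rcases helly hTE hg with ⟨c0', hstar'⟩ |
        ⟨pp, qq, rr, hpq, hpr, hqr, hgrep, ⟨t1, ht1, ht1v⟩, ⟨t2, ht2, ht2v⟩, hclsg⟩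
      · exfalso
        have hc0'g : c0' ∈ g.1 := hstar' g hg (sh_self _)
        have hgd := hdisjg c0' hc0'g
        have hcnt := count (show 0 < n by omega) hTE (W := {c0, c0'}) ?_ ?_
        · rw [card_pair (Ne.symm hgd.1)] at hcnt
          omega
        · intro w hw e he hwe f hf hsef
          rcases mem_insert.mp hw with rfl | hw
          · exact hstarW w (mem_singleton_self _) e he hwe f hf hsef
          · rw [mem_singleton] at hw
            subst hw
            exact hstar' f hf (hTE g hg e he f hf ⟨w, hc0'g, hwe⟩ hsef)
        · intro w hw w' hw' hww' e he
          rintro ⟨hwe, hw'e⟩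
          have hce : c0 ∈ (e : Sym2 (Fin n)) ∧ c0' ∈ (e : Sym2 (Fin n)) := by
            rcases mem_insert.mp hw with rfl | hw
            · rcases mem_insert.mp hw' with rfl | hw'
              · exact absurd rfl hww'
              · rw [mem_singleton] at hw'
                subst hw'
                exact ⟨hwe, hw'e⟩
            · rw [mem_singleton] at hw
              subst hw
              rcases mem_insert.mp hw' with rfl | hw'
              · exact ⟨hw'e, hwe⟩
              · rw [mem_singleton] at hw'
                subst hw'
                exact absurd rfl hww'
          rcases hclsK e he ⟨c0, by rw [hurep]; simp, hce.1⟩ with rfl | rfl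
          · have := hce.2
            rw [hurep, Sym2.mem_iff] at this
            rcases this with h | h
            · exact hgd.1 h
            · exact hgd.2.1 h
          · have := hce.2
            rw [hf0v, Sym2.mem_iff] at this
            rcases this with h | h
            · exact hgd.1 h
            · exact hgd.2.2 h
      · -- triangle class
        have hqqg : qq ∈ g.1 := by rw [hgrep]; simp
        have hppg : pp ∈ g.1 := by rw [hgrep]; simp
        have hqqd := hdisjg qq hqqg
        have hppd := hdisjg pp hppg
        refine ⟨pp, qq, rr, hpq, hpr, hqr, hgrep, ⟨t2, ht2, ht2v⟩, ⟨t1, ht1, ht1v⟩,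
          ?_, ?_, ?_⟩
        · rintro rfl
          -- rr = c0
          have : sh u.1 t1.1 := ⟨rr, by rw [hurep]; simp, by rw [ht1v]; simp⟩
          rcases hclsK t1 ht1 this with rfl | rfl
          · rw [hurep] at ht1v
            rw [Sym2.eq_iff] at ht1v
            rcases ht1v with ⟨h1, h2⟩ | ⟨h1, h2⟩
            · exact hqqd.1 h1.symm
            · exact hqqd.2.1 h2.symm
          · rw [hf0v] at ht1v
            rw [Sym2.eq_iff] at ht1v
            rcases ht1v with ⟨h1, h2⟩ | ⟨h1, h2⟩
            · exact hqqd.1 h1.symm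
            · exact hqqd.2.2 h2.symm
        · rintro rfl
          -- rr = p
          have : sh u.1 t1.1 := ⟨rr, by rw [hurep]; simp, by rw [ht1v]; simp⟩
          rcases hclsK t1 ht1 this with rfl | rfl
          · rw [hurep] at ht1v
            rw [Sym2.eq_iff] at ht1v
            rcases ht1v with ⟨h1, h2⟩ | ⟨h1, h2⟩
            · exact hqqd.1 h1.symm
            · exact hl1 h1.symm
          · rw [hf0v] at ht1v
            rw [Sym2.eq_iff] at ht1v
            rcases ht1v with ⟨h1, h2⟩ | ⟨h1, h2⟩
            · exact hqqd.1 h1.symm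
            · exact hqqd.2.2 h2.symm
        · rintro rfl
          -- rr = x
          have hsf0t1 : sh f0.1 t1.1 := ⟨rr, by rw [hf0v]; simp, by rw [ht1v]; simp⟩
          have : sh u.1 t1.1 := hTE u hu f0 hf0 t1 ht1 hshf0 hsf0t1
          rcases hclsK t1 ht1 this with rfl | rfl
          · rw [hurep] at ht1v
            rw [Sym2.eq_iff] at ht1v
            rcases ht1v with ⟨h1, h2⟩ | ⟨h1, h2⟩
            · exact hqqd.1 h1.symm
            · exact hxc0 h1.symm
          · rw [hf0v] at ht1v
            rw [Sym2.eq_iff] at ht1v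
            rcases ht1v with ⟨h1, h2⟩ | ⟨h1, h2⟩
            · exact hqqd.1 h1.symm
            · exact hxc0 h1.symm
  · -- x outside the star's support: impossible
    exfalso
    push_neg at hQ
    by_cases hQx : ∀ e ∈ E, x ∈ (e : Sym2 (Fin n)) →
        ∀ f ∈ E, sh e.1 f.1 → x ∈ (f : Sym2 (Fin n))
    · have hcnt := count (show 0 < n by omega) hTE (W := {c0, x}) ?_ ?_
      · rw [card_pair (Ne.symm hxc0)] at hcnt
        omega
      · intro w hw e he hwe f hf hsef
        rcases mem_insert.mp hw with rfl | hw
        · exact hstarW w (mem_singleton_self _) e he hwe f hf hsef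
        · rw [mem_singleton] at hw
          subst hw
          exact hQx e he hwe f hf hsef
      · intro w hw w' hw' hww' e he
        rintro ⟨hwe, hw'e⟩
        have hce : c0 ∈ (e : Sym2 (Fin n)) ∧ x ∈ (e : Sym2 (Fin n)) := by
          rcases mem_insert.mp hw with rfl | hw
          · rcases mem_insert.mp hw' with rfl | hw'
            · exact absurd rfl hww'
            · rw [mem_singleton] at hw'
              subst hw'
              exact ⟨hwe, hw'e⟩
          · rw [mem_singleton] at hw
            subst hw
            rcases mem_insert.mp hw' with rfl | hw'
            · exact ⟨hw'e, hwe⟩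
            · rw [mem_singleton] at hw'
              subst hw'
              exact absurd rfl hww'
        exact hQ e he ⟨c0, by rw [hurep]; simp, hce.1⟩ hce.2
    · push_neg at hQx
      obtain ⟨e1, he1, hxe1, f1', hf1', hshef, hxf1'⟩ := hQx
      have he1u : e1 ≠ u := fun h => hxu (h ▸ hxe1)
      have hshue1 : ∀ (_ : sh u.1 e1.1), False := fun h => hQ e1 he1 h hxe1
      have hf1u : f1' ≠ u := by
        intro h
        rw [h] at hshef
        exact hshue1 (sh_symm hshef)
      have hpf : p ∉ f1'.1 := by
        intro hp
        exact hshue1 (hTE u hu f1' hf1' e1 he1 ⟨p, hpu, hp⟩ (sh_symm hshef))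
      have : sh v.1 f1'.1 := hTE' v hvE' e1 (hmemE' _ he1 he1u) f1' (hmemE' _ hf1' hf1u)
        ⟨x, by rw [hvrep]; simp, hxe1⟩ hshef
      obtain ⟨w, hw1, hw2⟩ := this
      rw [hvrep, Sym2.mem_iff] at hw1
      rcases hw1 with rfl | rfl
      · exact hpf hw2
      · exact hxf1' hw2

def inTri (a b c : Fin n) (e : EV n) : Prop :=
  (e : Sym2 (Fin n)) = s(a,b) ∨ (e : Sym2 (Fin n)) = s(a,c) ∨ (e : Sym2 (Fin n)) = s(b,c)

lemma inTri_mem {a b c : Fin n} {e : EV n} (h : inTri a b c e) {w : Fin n}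
    (hw : w ∈ (e : Sym2 (Fin n))) : w = a ∨ w = b ∨ w = c := by
  rcases h with h | h | h <;> rw [h, Sym2.mem_iff] at hw <;> tauto

lemma inTri_of_mem {a b c : Fin n} {w1 w2 : Fin n}
    (h1 : w1 = a ∨ w1 = b ∨ w1 = c) (h2 : w2 = a ∨ w2 = b ∨ w2 = c)
    (hne : w1 ≠ w2) {e : EV n} (he : (e : Sym2 (Fin n)) = s(w1, w2)) :
    inTri a b c e := by
  unfold inTri
  rcases h1 with rfl | rfl | rfl <;> rcases h2 with rfl | rfl | rfl
  · exact absurd rfl hne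
  · exact Or.inl he
  · exact Or.inr (Or.inl he)
  · exact Or.inl (he.trans Sym2.eq_swap)
  · exact absurd rfl hne
  · exact Or.inr (Or.inr he)
  · exact Or.inr (Or.inl (he.trans Sym2.eq_swap))
  · exact Or.inr (Or.inr (he.trans Sym2.eq_swap))
  · exact absurd rfl hne

/-- Step lemma: legal moves preserve the "triangles plus a P3 inside Δ" structure. -/
lemma step {a b c : Fin n} {D : Finset (EV n)}
    (hD1 : ∀ g ∈ D, ∀ w ∈ (g : Sym2 (Fin n)), w ≠ a ∧ w ≠ b ∧ w ≠ c)
    (hD2 : ∀ g ∈ D, ∃ p q r : Fin n, p ≠ q ∧ p ≠ r ∧ q ≠ r ∧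
      (g : Sym2 (Fin n)) = s(p,q) ∧
      (∃ t1 ∈ D, (t1 : Sym2 (Fin n)) = s(p,r)) ∧ (∃ t2 ∈ D, (t2 : Sym2 (Fin n)) = s(q,r)))
    (hcov : ∀ y : Fin n, y ≠ a → y ≠ b → y ≠ c → ∃ g ∈ D, y ∈ (g : Sym2 (Fin n)))
    {T T' : Finset (EV n)}
    (hHP : ∃ A1 A2 : EV n, A1 ≠ A2 ∧ inTri a b c A1 ∧ inTri a b c A2 ∧
      T = insert A1 (insert A2 D))
    (hmv : LegalMove (LG n) T T') :
    ∃ A1 A2 : EV n, A1 ≠ A2 ∧ inTri a b c A1 ∧ inTri a b c A2 ∧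
      T' = insert A1 (insert A2 D) := by
  obtain ⟨u, hu, v, hv, hadj, hT', hgpT'⟩ := hmv
  have hTT' := gp_trans hgpT'
  obtain ⟨A1, A2, h12, hA1, hA2, hTeq⟩ := hHP
  rw [lg_adj] at hadj
  obtain ⟨hneuv, hshuv⟩ := hadj
  have hTriD : ∀ e : EV n, inTri a b c e → e ∉ D := by
    intro e he hed
    rcases he with h | h | h
    · exact (hD1 e hed a (by rw [h]; simp)).1 rfl
    · exact (hD1 e hed a (by rw [h]; simp)).1 rfl
    · exact (hD1 e hed b (by rw [h]; simp)).2.1 rfl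
  have hDT : ∀ g ∈ D, g ∈ T := by
    intro g hg; rw [hTeq]; exact mem_insert_of_mem (mem_insert_of_mem hg)
  have hmemT' : ∀ g ∈ T, g ≠ u → g ∈ T' := fun g hg hgu => by
    rw [hT']; exact mem_insert_of_mem (mem_erase.mpr ⟨hgu, hg⟩)
  have hvT' : v ∈ T' := by rw [hT']; exact mem_insert_self _ _
  -- the moved robot is not on a triangle edge of D
  have huD : u ∉ D := by
    intro huD
    obtain ⟨p, q, r, hpq, hpr, hqr, hurep2, ⟨t1, ht1, ht1v⟩, ⟨t2, ht2, ht2v⟩⟩ := hD2 u huD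
    obtain ⟨m, hmu, hmv'⟩ := hshuv
    obtain ⟨x, hxm, hvrep⟩ := other_rep hmv'
    have hxu : x ∉ (u : Sym2 (Fin n)) := by
      intro hxu
      have : u.1 = s(m, x) := eq_of_two_mem (Ne.symm hxm) hmu hxu
      exact hneuv (Subtype.ext (by rw [this, hvrep]))
    have hxp : x ≠ p := fun h => hxu (by rw [hurep2, h]; simp)
    have hxq : x ≠ q := fun h => hxu (by rw [hurep2, h]; simp)
    have hxr : x ≠ r := by
      rintro rfl
      rw [hurep2, Sym2.mem_iff] at hmu
      rcases hmu with rfl | rfl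
      · exact hv (by
          rw [show v = t1 from Subtype.ext (by rw [hvrep, ht1v])]
          exact hDT t1 ht1)
      · exact hv (by
          rw [show v = t2 from Subtype.ext (by rw [hvrep, ht2v])]
          exact hDT t2 ht2)
    have ht1u : t1 ≠ u := by
      intro h
      rw [h, hurep2] at ht1v
      rw [Sym2.eq_iff] at ht1v
      rcases ht1v with ⟨h1, h2⟩ | ⟨h1, h2⟩
      · exact hqr h2
      · exact hpr h1
    have ht2u : t2 ≠ u := by
      intro h
      rw [h, hurep2] at ht2v
      rw [Sym2.eq_iff] at ht2v
      rcases ht2v with ⟨h1, h2⟩ | ⟨h1, h2⟩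
      · exact hpq h1
      · exact hpr h1
    rw [hurep2, Sym2.mem_iff] at hmu
    rcases hmu with hmp | hmq
    · have hsvt1 : sh v.1 t1.1 := ⟨m, by rw [hvrep]; simp, by rw [ht1v, hmp]; simp⟩
      have hst1t2 : sh t1.1 t2.1 := ⟨r, by rw [ht1v]; simp, by rw [ht2v]; simp⟩
      have := hTT' v hvT' t1 (hmemT' t1 (hDT t1 ht1) ht1u) t2
        (hmemT' t2 (hDT t2 ht2) ht2u) hsvt1 hst1t2
      obtain ⟨w, hw1, hw2⟩ := this
      rw [hvrep, Sym2.mem_iff] at hw1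
      rw [ht2v, Sym2.mem_iff] at hw2
      rcases hw1 with h | h <;> rcases hw2 with h' | h'
      · exact hpq (hmp.symm.trans (h.symm.trans h'))
      · exact hpr (hmp.symm.trans (h.symm.trans h'))
      · exact hxq (h.symm.trans h')
      · exact hxr (h.symm.trans h')
    · have hsvt2 : sh v.1 t2.1 := ⟨m, by rw [hvrep]; simp, by rw [ht2v, hmq]; simp⟩
      have hst2t1 : sh t2.1 t1.1 := ⟨r, by rw [ht2v]; simp, by rw [ht1v]; simp⟩
      have := hTT' v hvT' t2 (hmemT' t2 (hDT t2 ht2) ht2u) t1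
        (hmemT' t1 (hDT t1 ht1) ht1u) hsvt2 hst2t1
      obtain ⟨w, hw1, hw2⟩ := this
      rw [hvrep, Sym2.mem_iff] at hw1
      rw [ht1v, Sym2.mem_iff] at hw2
      rcases hw1 with h | h <;> rcases hw2 with h' | h'
      · exact hpq ((h.symm.trans h').symm.trans hmq)
      · exact hqr (hmq.symm.trans (h.symm.trans h'))
      · exact hxp (h.symm.trans h')
      · exact hxr (h.symm.trans h')
  have huA : u = A1 ∨ u = A2 := by
    have hmem := hu
    rw [hTeq] at hmem
    rcases mem_insert.mp hmem with h | h
    · exact Or.inl h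
    rcases mem_insert.mp h with h | h
    · exact Or.inr h
    · exact absurd h huD
  suffices haux : ∀ B2 : EV n, B2 ≠ u → inTri a b c u → inTri a b c B2 →
      T = insert u (insert B2 D) →
      ∃ A1' A2' : EV n, A1' ≠ A2' ∧ inTri a b c A1' ∧ inTri a b c A2' ∧
        T' = insert A1' (insert A2' D) by
    rcases huA with rfl | rfl
    · exact haux A2 (Ne.symm h12) hA1 hA2 hTeq
    · exact haux A1 h12 hA2 hA1 (by rw [hTeq, Finset.insert_comm])
  intro B2 hB2u hutri hB2tri hTeq2
  have huniD : u ∉ insert B2 D := by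
    rw [mem_insert]
    rintro (rfl | h)
    · exact hB2u rfl
    · exact hTriD u hutri h
  have herase : T.erase u = insert B2 D := by rw [hTeq2]; exact erase_insert huniD
  obtain ⟨m, hmu, hmv'⟩ := hshuv
  obtain ⟨x, hxm, hvrep⟩ := other_rep hmv'
  have hmΔ : m = a ∨ m = b ∨ m = c := inTri_mem hutri hmu
  by_cases hxΔ : x = a ∨ x = b ∨ x = c
  · refine ⟨v, B2, ?_, inTri_of_mem hmΔ hxΔ (Ne.symm hxm) hvrep, hB2tri, ?_⟩
    · intro h
      rw [h] at hv
      exact hv (by rw [hTeq2]; exact mem_insert_of_mem (mem_insert_self _ _))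
    · rw [hT', herase]
  · push_neg at hxΔ
    exfalso
    obtain ⟨g, hgD, hxg0⟩ := hcov x hxΔ.1 hxΔ.2.1 hxΔ.2.2
    obtain ⟨p, q, r, hpq, hpr, hqr, hgrep, ⟨t1, ht1, ht1v⟩, ⟨t2, ht2, ht2v⟩⟩ := hD2 g hgD
    have hgu : g ≠ u := fun h => hTriD u hutri (h ▸ hgD)
    have ht1u : t1 ≠ u := fun h => hTriD u hutri (h ▸ ht1)
    have ht2u : t2 ≠ u := fun h => hTriD u hutri (h ▸ ht2)
    have hmt1 : m ∉ (t1 : Sym2 (Fin n)) := by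
      intro h
      have hc := hD1 t1 ht1 m h
      rcases hmΔ with rfl | rfl | rfl
      · exact hc.1 rfl
      · exact hc.2.1 rfl
      · exact hc.2.2 rfl
    have hmt2 : m ∉ (t2 : Sym2 (Fin n)) := by
      intro h
      have hc := hD1 t2 ht2 m h
      rcases hmΔ with rfl | rfl | rfl
      · exact hc.1 rfl
      · exact hc.2.1 rfl
      · exact hc.2.2 rfl
    have hxg := hxg0
    rw [hgrep, Sym2.mem_iff] at hxg
    rcases hxg with hxp | hxq
    · -- x = p : triple (v, g, t2)
      have hsvg : sh v.1 g.1 := ⟨x, by rw [hvrep]; simp, hxg0⟩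
      have hsgt2 : sh g.1 t2.1 := ⟨q, by rw [hgrep]; simp, by rw [ht2v]; simp⟩
      have := hTT' v hvT' g (hmemT' g (hDT g hgD) hgu) t2
        (hmemT' t2 (hDT t2 ht2) ht2u) hsvg hsgt2
      obtain ⟨w, hw1, hw2⟩ := this
      rw [hvrep, Sym2.mem_iff] at hw1
      have hw2' := hw2
      rw [ht2v, Sym2.mem_iff] at hw2'
      rcases hw1 with h | h
      · exact hmt2 (h ▸ hw2)
      · rcases hw2' with h' | h'
        · exact hpq (hxp.symm.trans (h.symm.trans h'))
        · exact hpr (hxp.symm.trans (h.symm.trans h'))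
    · -- x = q : triple (v, g, t1)
      have hsvg : sh v.1 g.1 := ⟨x, by rw [hvrep]; simp, hxg0⟩
      have hsgt1 : sh g.1 t1.1 := ⟨p, by rw [hgrep]; simp, by rw [ht1v]; simp⟩
      have := hTT' v hvT' g (hmemT' g (hDT g hgD) hgu) t1
        (hmemT' t1 (hDT t1 ht1) ht1u) hsvg hsgt1
      obtain ⟨w, hw1, hw2⟩ := this
      rw [hvrep, Sym2.mem_iff] at hw1
      have hw2' := hw2
      rw [ht1v, Sym2.mem_iff] at hw2'
      rcases hw1 with h | h
      · exact hmt1 (h ▸ hw2)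
      · rcases hw2' with h' | h'
        · exact hpq (h'.symm.trans (h.trans hxq))
        · exact hqr (hxq.symm.trans (h.symm.trans h'))

/-- Upper bound: a mobile general position set in L(K_n) has at most n-2 elements. -/
theorem upper (hn : 4 ≤ n) {S : Finset (EV n)} (hmob : IsMobileGPSet (LG n) S) :
    S.card ≤ n - 2 := by
  by_contra hbig
  push_neg at hbig
  obtain ⟨hgp, m, f, hf0, hmoves, hcov⟩ := hmob
  have hTS := gp_trans hgp
  have hcardn : S.card ≤ n := by
    have := count (show 0 < n by omega) hTS (W := (∅ : Finset (Fin n))) (by simp) (by simp)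
    simpa using this
  have hcard1 : n - 1 ≤ S.card := by omega
  -- not every vertex of L(K_n) can belong to S
  have hallS : ¬ (∀ w : EV n, w ∈ S) := by
    intro hall
    have h01 : (⟨0, by omega⟩ : Fin n) ≠ ⟨1, by omega⟩ := by simp
    have h12 : (⟨1, by omega⟩ : Fin n) ≠ ⟨2, by omega⟩ := by simp
    have h23 : (⟨2, by omega⟩ : Fin n) ≠ ⟨3, by omega⟩ := by simp
    have := hTS (mkE ⟨0, by omega⟩ ⟨1, by omega⟩ h01) (hall _)
      (mkE ⟨1, by omega⟩ ⟨2, by omega⟩ h12) (hall _)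
      (mkE ⟨2, by omega⟩ ⟨3, by omega⟩ h23) (hall _)
      ⟨⟨1, by omega⟩, by simp [mkE], by simp [mkE]⟩
      ⟨⟨2, by omega⟩, by simp [mkE], by simp [mkE]⟩
    obtain ⟨w, hw1, hw2⟩ := this
    simp only [mkE_val, Sym2.mem_iff] at hw1 hw2
    rcases hw1 with rfl | rfl <;> rcases hw2 with h | h <;> simp_all
  have hm1 : 0 < m := by
    by_contra hm0
    push_neg at hm0
    apply hallS
    intro w
    obtain ⟨i, hi, hwi⟩ := hcov w
    have hi0 : i = 0 := by omega
    rw [hi0, hf0] at hwi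
    exact hwi
  obtain ⟨u, hu, v, hv, hadj, hT', hgp1⟩ := hmoves 0 hm1
  rw [hf0] at hu hv hT'
  rw [lg_adj] at hadj
  obtain ⟨a, b, c, hab, hac, hbc, hurep, hvrep, ⟨e2, he2, he2v⟩, hdisj, hcovS, htri⟩ :=
    core hn hgp hgp1 hcard1 hu hv hadj.1 hadj.2 hT'
  classical
  set D := S.filter (fun g : EV n => ∀ w ∈ (g.1 : Sym2 (Fin n)), w ≠ a ∧ w ≠ b ∧ w ≠ c) with hDdef
  have hD1 : ∀ g ∈ D, ∀ w ∈ (g : Sym2 (Fin n)), w ≠ a ∧ w ≠ b ∧ w ≠ c := fun g hg =>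
    (mem_filter.mp hg).2
  have hD2 : ∀ g ∈ D, ∃ p q r : Fin n, p ≠ q ∧ p ≠ r ∧ q ≠ r ∧
      (g : Sym2 (Fin n)) = s(p,q) ∧
      (∃ t1 ∈ D, (t1 : Sym2 (Fin n)) = s(p,r)) ∧
      (∃ t2 ∈ D, (t2 : Sym2 (Fin n)) = s(q,r)) := by
    intro g hg
    have hgS := (mem_filter.mp hg).1
    obtain ⟨p, q, r, hpq, hpr, hqr, hgrep, ⟨t1, ht1, ht1v⟩, ⟨t2, ht2, ht2v⟩, hrd⟩ :=
      htri g hgS (hD1 g hg)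
    have hpd := hD1 g hg p (by rw [hgrep]; simp)
    have hqd := hD1 g hg q (by rw [hgrep]; simp)
    refine ⟨p, q, r, hpq, hpr, hqr, hgrep,
      ⟨t1, mem_filter.mpr ⟨ht1, ?_⟩, ht1v⟩, ⟨t2, mem_filter.mpr ⟨ht2, ?_⟩, ht2v⟩⟩
    · intro w hw
      rw [ht1v, Sym2.mem_iff] at hw
      rcases hw with rfl | rfl
      · exact hpd
      · exact hrd
    · intro w hw
      rw [ht2v, Sym2.mem_iff] at hw
      rcases hw with rfl | rfl
      · exact hqd
      · exact hrd
  have hcovD : ∀ y : Fin n, y ≠ a → y ≠ b → y ≠ c → ∃ g ∈ D, y ∈ (g : Sym2 (Fin n)) := by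
    intro y h1 h2 h3
    obtain ⟨g, hgS, hyg, hgd⟩ := hcovS y h1 h2 h3
    exact ⟨g, mem_filter.mpr ⟨hgS, hgd⟩, hyg⟩
  have hSdecomp : S = insert u (insert e2 D) := by
    ext g
    constructor
    · intro hgS
      by_cases hg1 : (g : Sym2 (Fin n)) = s(a,b)
      · have hgu : g = u := Subtype.ext (by rw [hg1, hurep])
        rw [hgu]; exact mem_insert_self _ _
      by_cases hg2 : (g : Sym2 (Fin n)) = s(a,c)
      · have hge : g = e2 := Subtype.ext (by rw [hg2, he2v])
        rw [hge]; exact mem_insert_of_mem (mem_insert_self _ _)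
      · exact mem_insert_of_mem (mem_insert_of_mem
          (mem_filter.mpr ⟨hgS, hdisj g hgS hg1 hg2⟩))
    · intro hg
      rcases mem_insert.mp hg with rfl | hg
      · exact hu
      rcases mem_insert.mp hg with rfl | hg
      · exact he2
      · exact (mem_filter.mp hg).1
  have hue2 : u ≠ e2 := by
    intro h
    rw [h, he2v] at hurep
    rw [Sym2.eq_iff] at hurep
    rcases hurep with ⟨h1, h2⟩ | ⟨h1, h2⟩
    · exact hbc h2.symm
    · exact hab h1
  have hHP : ∀ i, i ≤ m → ∃ A1 A2 : EV n, A1 ≠ A2 ∧ inTri a b c A1 ∧ inTri a b c A2 ∧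
      f i = insert A1 (insert A2 D) := by
    intro i
    induction i with
    | zero => exact fun _ => ⟨u, e2, hue2, Or.inl hurep, Or.inr (Or.inl he2v),
        by rw [hf0]; exact hSdecomp⟩
    | succ k ih =>
      intro hk
      exact step hD1 hD2 hcovD (ih (by omega)) (hmoves k (by omega))
  -- find a vertex d outside the triple and derive the contradiction
  have hdex : ∃ d : Fin n, d ∉ ({a, b, c} : Finset (Fin n)) := by
    have hc3 : ({a, b, c} : Finset (Fin n)).card ≤ 3 := by
      apply le_trans (card_insert_le _ _)
      apply Nat.succ_le_succ
      apply le_trans (card_insert_le _ _)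
      simp
    have : 0 < (univ \ ({a, b, c} : Finset (Fin n))).card := by
      rw [card_sdiff_of_subset (subset_univ _), card_univ, Fintype.card_fin]
      omega
    obtain ⟨d, hd⟩ := card_pos.mp this
    exact ⟨d, (mem_sdiff.mp hd).2⟩
  obtain ⟨d, hd⟩ := hdex
  simp only [mem_insert, mem_singleton] at hd
  push_neg at hd
  obtain ⟨hda, hdb, hdc⟩ := hd
  have had : a ≠ d := Ne.symm hda
  obtain ⟨i, hi, hei⟩ := hcov (mkE a d had)
  obtain ⟨A1, A2, h12', hA1, hA2, hfi⟩ := hHP i hi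
  have hnotri : ¬ inTri a b c (mkE a d had) := by
    rintro (h | h | h) <;> rw [mkE_val, Sym2.eq_iff] at h
    · rcases h with ⟨h1, h2⟩ | ⟨h1, h2⟩
      · exact hdb h2
      · exact hab h1
    · rcases h with ⟨h1, h2⟩ | ⟨h1, h2⟩
      · exact hdc h2
      · exact hac h1
    · rcases h with ⟨h1, h2⟩ | ⟨h1, h2⟩
      · exact hab h1
      · exact hac h1
  rw [hfi] at hei
  rcases mem_insert.mp hei with h | h
  · exact hnotri (h ▸ hA1)
  rcases mem_insert.mp h with h | h
  · exact hnotri (h ▸ hA2)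
  · exact (hD1 _ h a (by rw [mkE_val]; simp)).1 rfl

noncomputable instance : Fintype (EV n) := Fintype.ofFinite _

/-- A tour: a sequence of legal moves starting and ending at `S`. -/
def Tour (S : Finset (EV n)) (m : ℕ) (f : ℕ → Finset (EV n)) : Prop :=
  f 0 = S ∧ f m = S ∧ ∀ i < m, LegalMove (LG n) (f i) (f (i + 1))

lemma tour_comp {S : Finset (EV n)} {m1 m2 : ℕ} {f1 f2 : ℕ → Finset (EV n)}
    (h1 : Tour S m1 f1) (h2 : Tour S m2 f2) :
    Tour S (m1 + m2) (fun i => if i < m1 then f1 i else f2 (i - m1)) := by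
  obtain ⟨h10, h1m, h1mv⟩ := h1
  obtain ⟨h20, h2m, h2mv⟩ := h2
  refine ⟨?_, ?_, ?_⟩
  · by_cases h : 0 < m1
    · simp [h, h10]
    · have h0 : m1 = 0 := by omega
      simp [h0, h20]
  · have h : ¬ (m1 + m2 < m1) := by omega
    simp only [h, if_false]
    rw [Nat.add_sub_cancel_left]
    exact h2m
  · intro i hi
    by_cases hi1 : i + 1 < m1
    · have hi0 : i < m1 := by omega
      simp only [hi0, hi1, if_true]
      exact h1mv i hi0
    · by_cases hi0 : i < m1
      · have hieq : i + 1 = m1 := by omega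
        simp only [hi0, hi1, if_true, if_false]
        have he : f2 (i + 1 - m1) = f1 (i + 1) := by
          rw [hieq, Nat.sub_self, h20, ← h1m]
        rw [he]
        exact h1mv i hi0
      · simp only [hi0, hi1, if_false]
        have he : i - m1 + 1 = i + 1 - m1 := by omega
        rw [← he]
        exact h2mv (i - m1) (by omega)

lemma tours_cover {S : Finset (EV n)} (hgp : IsGPSet (LG n) S)
    (h : ∀ w : EV n, ∃ m f, Tour S m f ∧ ∃ i ≤ m, w ∈ f i) :
    IsMobileGPSet (LG n) S := by
  suffices key : ∀ L : List (EV n), ∃ m f, Tour S m f ∧ ∀ w ∈ L, ∃ i ≤ m, w ∈ f i by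
    obtain ⟨m, f, ⟨hf0, hfm, hmv⟩, hcov⟩ := key (Finset.univ.toList)
    exact ⟨hgp, m, f, hf0, hmv, fun w => hcov w (by simp)⟩
  intro L
  induction L with
  | nil => exact ⟨0, fun _ => S, ⟨rfl, rfl, fun i hi => absurd hi (by omega)⟩, by simp⟩
  | cons w L ih =>
    obtain ⟨m1, f1, ht1, i1, hi1, hw1⟩ := h w
    obtain ⟨m2, f2, ht2, hcov2⟩ := ih
    refine ⟨m1 + m2, _, tour_comp ht1 ht2, ?_⟩
    intro w' hw'
    rcases List.mem_cons.mp hw' with rfl | hw'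
    · by_cases hc : i1 < m1
      · exact ⟨i1, by omega, by simpa [hc] using hw1⟩
      · have hie : i1 = m1 := by omega
        refine ⟨m1 + m2, le_refl _, ?_⟩
        have hx : ¬ (m1 + m2 < m1) := by omega
        simp only [hx, if_false]
        rw [Nat.add_sub_cancel_left]
        rw [ht2.2.1, ← ht1.2.1, ← hie]
        exact hw1
    · obtain ⟨i, hi, hwi⟩ := hcov2 w' hw'
      refine ⟨m1 + i, by omega, ?_⟩
      have hx : ¬ (m1 + i < m1) := by omega
      simp only [hx, if_false]
      rwa [Nat.add_sub_cancel_left]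

lemma insert_erase_rev {α : Type*} [DecidableEq α] {T : Finset α} {u v : α}
    (hv : v ∈ T) (hu : u ∉ T) (huv : u ≠ v) :
    insert v ((insert u (T.erase v)).erase u) = T := by
  rw [erase_insert (fun h => hu (mem_of_mem_erase h))]
  exact insert_erase hv

/-- The base configuration: the star at `z` minus the edge to `o`. -/
noncomputable def SB (z o : Fin n) : Finset (EV n) :=
  Finset.univ.filter (fun e : EV n => z ∈ (e.1 : Sym2 (Fin n)) ∧ o ∉ (e.1 : Sym2 (Fin n)))

lemma mem_SB {z o : Fin n} {e : EV n} :
    e ∈ SB z o ↔ z ∈ (e.1 : Sym2 (Fin n)) ∧ o ∉ (e.1 : Sym2 (Fin n)) := by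
  simp [SB]

noncomputable def CC1 (z o i : Fin n) (hoi : o ≠ i) (hzi : z ≠ i) : Finset (EV n) :=
  insert (mkE o i hoi) ((SB z o).erase (mkE z i hzi))

noncomputable def CC2 (z o i j : Fin n) (hoi : o ≠ i) (hzi : z ≠ i) (hij : i ≠ j)
    (hzj : z ≠ j) : Finset (EV n) :=
  insert (mkE i j hij) ((CC1 z o i hoi hzi).erase (mkE z j hzj))

noncomputable def CC3 (z o i : Fin n) (hzo : z ≠ o) (hoi : o ≠ i) (hzi : z ≠ i) :
    Finset (EV n) :=
  insert (mkE z o hzo) ((CC1 z o i hoi hzi).erase (mkE o i hoi))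

lemma gp_of_star {z : Fin n} {T : Finset (EV n)}
    (h : ∀ e ∈ T, z ∈ (e.1 : Sym2 (Fin n))) : IsGPSet (LG n) T := by
  rw [gp_iff]
  intro x hx y hy w hw _ _ _ _ _
  exact ⟨z, h x hx, h w hw⟩

lemma gp_protocol {z o i j : Fin n} (hzo : z ≠ o) (hzi : z ≠ i) (hzj : z ≠ j)
    {T : Finset (EV n)}
    (h : ∀ e ∈ T, (e.1 : Sym2 (Fin n)) = s(o,i) ∨ (e.1 : Sym2 (Fin n)) = s(i,j) ∨
      (z ∈ (e.1 : Sym2 (Fin n)) ∧ o ∉ (e.1 : Sym2 (Fin n)) ∧ i ∉ (e.1 : Sym2 (Fin n)) ∧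
        j ∉ (e.1 : Sym2 (Fin n)))) :
    IsGPSet (LG n) T := by
  rw [gp_iff]
  intro x hx y hy w hw _ _ _ hxy hyw
  have key : ∀ e ∈ T, ∀ f ∈ T, sh e.1 f.1 →
      (z ∈ (e.1 : Sym2 (Fin n)) ∧ o ∉ (e.1 : Sym2 (Fin n)) ∧ i ∉ (e.1 : Sym2 (Fin n)) ∧
        j ∉ (e.1 : Sym2 (Fin n))) →
      (z ∈ (f.1 : Sym2 (Fin n)) ∧ o ∉ (f.1 : Sym2 (Fin n)) ∧ i ∉ (f.1 : Sym2 (Fin n)) ∧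
        j ∉ (f.1 : Sym2 (Fin n))) := by
    intro e he f hf hsef hC
    rcases h f hf with hA | hB | hC'
    · exfalso
      obtain ⟨ww, hw1, hw2⟩ := hsef
      rw [hA, Sym2.mem_iff] at hw2
      rcases hw2 with rfl | rfl
      · exact hC.2.1 hw1
      · exact hC.2.2.1 hw1
    · exfalso
      obtain ⟨ww, hw1, hw2⟩ := hsef
      rw [hB, Sym2.mem_iff] at hw2
      rcases hw2 with rfl | rfl
      · exact hC.2.2.1 hw1
      · exact hC.2.2.2 hw1
    · exact hC'
  have hImem : ∀ e ∈ T, ¬ (z ∈ (e.1 : Sym2 (Fin n)) ∧ o ∉ (e.1 : Sym2 (Fin n)) ∧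
      i ∉ (e.1 : Sym2 (Fin n)) ∧ j ∉ (e.1 : Sym2 (Fin n))) → i ∈ (e.1 : Sym2 (Fin n)) := by
    intro e he hne
    rcases h e he with hA | hB | hC
    · rw [hA]; simp
    · rw [hB]; simp
    · exact absurd hC hne
  by_cases hCx : z ∈ (x.1 : Sym2 (Fin n)) ∧ o ∉ (x.1 : Sym2 (Fin n)) ∧
      i ∉ (x.1 : Sym2 (Fin n)) ∧ j ∉ (x.1 : Sym2 (Fin n))
  · have hCy := key x hx y hy hxy hCx
    have hCw := key y hy w hw hyw hCy
    exact ⟨z, hCx.1, hCw.1⟩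
  · have hCyn : ¬ (z ∈ (y.1 : Sym2 (Fin n)) ∧ o ∉ (y.1 : Sym2 (Fin n)) ∧
        i ∉ (y.1 : Sym2 (Fin n)) ∧ j ∉ (y.1 : Sym2 (Fin n))) := by
      intro hCy
      exact hCx (key y hy x hx (sh_symm hxy) hCy)
    have hCwn : ¬ (z ∈ (w.1 : Sym2 (Fin n)) ∧ o ∉ (w.1 : Sym2 (Fin n)) ∧
        i ∉ (w.1 : Sym2 (Fin n)) ∧ j ∉ (w.1 : Sym2 (Fin n))) := by
      intro hCw
      exact hCyn (key w hw y hy (sh_symm hyw) hCw)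
    exact ⟨i, hImem x hx hCx, hImem w hw hCwn⟩

section Moves

variable {z o i j : Fin n}

lemma mkE_ne {a b c d : Fin n} (hab : a ≠ b) (hcd : c ≠ d)
    (h : ¬ ((a = c ∧ b = d) ∨ (a = d ∧ b = c))) : mkE a b hab ≠ mkE c d hcd := by
  intro he
  exact h (Sym2.eq_iff.mp (congrArg Subtype.val he))

lemma notmem_mk {a b c : Fin n} (h1 : a ≠ b) (h2 : a ≠ c) : a ∉ s(b, c) := by
  rw [Sym2.mem_iff]
  rintro (rfl | rfl)
  · exact h1 rfl
  · exact h2 rfl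

lemma mem_SB_zi (hzo : z ≠ o) (hzi : z ≠ i) (hoi : o ≠ i) : mkE z i hzi ∈ SB z o :=
  mem_SB.mpr ⟨by simp, notmem_mk (Ne.symm hzo) hoi⟩

lemma notmem_SB_oi (hzo : z ≠ o) (hzi : z ≠ i) (hoi : o ≠ i) : mkE o i hoi ∉ SB z o := by
  rw [mem_SB]
  rintro ⟨h1, -⟩
  exact notmem_mk hzo hzi h1

lemma notmem_SB_zo (hzo : z ≠ o) : mkE z o hzo ∉ SB z o := by
  rw [mem_SB]
  rintro ⟨-, h2⟩
  exact h2 (by simp)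

lemma notmem_SB_ij (hzi : z ≠ i) (hzj : z ≠ j) (hij : i ≠ j) : mkE i j hij ∉ SB z o := by
  rw [mem_SB]
  rintro ⟨h1, -⟩
  exact notmem_mk hzi hzj h1

lemma mem_CC1_zj (hzo : z ≠ o) (hzi : z ≠ i) (hzj : z ≠ j) (hoi : o ≠ i) (hoj : o ≠ j)
    (hji : j ≠ i) : mkE z j hzj ∈ CC1 z o i hoi hzi := by
  apply mem_insert_of_mem
  apply mem_erase.mpr
  refine ⟨mkE_ne hzj hzi ?_, mem_SB_zi hzo hzj hoj⟩
  rintro (⟨-, h⟩ | ⟨h, -⟩)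
  · exact hji h
  · exact hzi h

lemma notmem_CC1_ij (hzi : z ≠ i) (hzj : z ≠ j) (hoi : o ≠ i) (hoj : o ≠ j) (hij : i ≠ j) :
    mkE i j hij ∉ CC1 z o i hoi hzi := by
  rw [CC1, mem_insert]
  rintro (h | h)
  · refine mkE_ne hij hoi ?_ h
    rintro (⟨h1, -⟩ | ⟨-, h1⟩)
    · exact hoi h1.symm
    · exact hoj h1.symm
  · exact notmem_SB_ij hzi hzj hij (mem_of_mem_erase h)

lemma notmem_CC1_zo (hzo : z ≠ o) (hzi : z ≠ i) (hoi : o ≠ i) :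
    mkE z o hzo ∉ CC1 z o i hoi hzi := by
  rw [CC1, mem_insert]
  rintro (h | h)
  · refine mkE_ne hzo hoi ?_ h
    rintro (⟨h1, -⟩ | ⟨h1, -⟩)
    · exact hzo h1
    · exact hzi h1
  · exact notmem_SB_zo hzo (mem_of_mem_erase h)

lemma notmem_CC1_zi (hzo : z ≠ o) (hzi : z ≠ i) (hoi : o ≠ i) :
    mkE z i hzi ∉ CC1 z o i hoi hzi := by
  rw [CC1, mem_insert]
  rintro (h | h)
  · refine mkE_ne hzi hoi ?_ h
    rintro (⟨h1, -⟩ | ⟨h1, -⟩)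
    · exact hzo h1
    · exact hzi h1
  · exact (mem_erase.mp h).1 rfl

lemma mem_CC1_oi (hzi : z ≠ i) (hoi : o ≠ i) : mkE o i hoi ∈ CC1 z o i hoi hzi :=
  mem_insert_self _ _

lemma cc1_mem (hzi : z ≠ i) {hoi : o ≠ i} {e : EV n} (he : e ∈ CC1 z o i hoi hzi) :
    (e.1 : Sym2 (Fin n)) = s(o,i) ∨
      (z ∈ (e.1 : Sym2 (Fin n)) ∧ o ∉ (e.1 : Sym2 (Fin n)) ∧ i ∉ (e.1 : Sym2 (Fin n))) := by
  rw [CC1, mem_insert] at he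
  rcases he with rfl | he
  · exact Or.inl rfl
  · right
    have hne := (mem_erase.mp he).1
    have hSB := mem_SB.mp (mem_of_mem_erase he)
    refine ⟨hSB.1, hSB.2, ?_⟩
    intro hie
    exact hne (Subtype.ext (eq_of_two_mem hzi hSB.1 hie))

lemma cc2_mem (hzi : z ≠ i) (hzj : z ≠ j) {hoi : o ≠ i} {hij : i ≠ j} {e : EV n}
    (he : e ∈ CC2 z o i j hoi hzi hij hzj) :
    (e.1 : Sym2 (Fin n)) = s(i,j) ∨ (e.1 : Sym2 (Fin n)) = s(o,i) ∨
      (z ∈ (e.1 : Sym2 (Fin n)) ∧ o ∉ (e.1 : Sym2 (Fin n)) ∧ i ∉ (e.1 : Sym2 (Fin n)) ∧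
        j ∉ (e.1 : Sym2 (Fin n))) := by
  rw [CC2, mem_insert] at he
  rcases he with rfl | he
  · exact Or.inl rfl
  · have hne := (mem_erase.mp he).1
    rcases cc1_mem hzi (mem_of_mem_erase he) with h | h
    · exact Or.inr (Or.inl h)
    · right; right
      refine ⟨h.1, h.2.1, h.2.2, ?_⟩
      intro hje
      exact hne (Subtype.ext (eq_of_two_mem hzj h.1 hje))

lemma cc3_mem {hzo : z ≠ o} (hzi : z ≠ i) {hoi : o ≠ i} {e : EV n}
    (he : e ∈ CC3 z o i hzo hoi hzi) :
    z ∈ (e.1 : Sym2 (Fin n)) := by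
  rw [CC3, mem_insert] at he
  rcases he with rfl | he
  · simp
  · rcases cc1_mem hzi (mem_of_mem_erase he) with h | h
    · exact absurd (Subtype.ext h : _ = mkE o i hoi) (mem_erase.mp he).1
    · exact h.1

lemma gpSB : IsGPSet (LG n) (SB z o) :=
  gp_of_star (fun e he => (mem_SB.mp he).1)

lemma gpCC1 (hzo : z ≠ o) (hzi : z ≠ i) (hoi : o ≠ i) :
    IsGPSet (LG n) (CC1 z o i hoi hzi) := by
  apply gp_protocol hzo hzi hzi
  intro e he
  rcases cc1_mem hzi he with h | h
  · exact Or.inl h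
  · exact Or.inr (Or.inr ⟨h.1, h.2.1, h.2.2, h.2.2⟩)

lemma gpCC2 (hzo : z ≠ o) (hzi : z ≠ i) (hzj : z ≠ j) (hoi : o ≠ i) (hij : i ≠ j) :
    IsGPSet (LG n) (CC2 z o i j hoi hzi hij hzj) := by
  apply gp_protocol hzo hzi hzj
  intro e he
  rcases cc2_mem hzi hzj he with h | h | h
  · exact Or.inr (Or.inl h)
  · exact Or.inl h
  · exact Or.inr (Or.inr h)

lemma gpCC3 (hzo : z ≠ o) (hzi : z ≠ i) (hoi : o ≠ i) :
    IsGPSet (LG n) (CC3 z o i hzo hoi hzi) :=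
  gp_of_star (fun e he => cc3_mem hzi he)

lemma adjE {a b c d : Fin n} (hab : a ≠ b) (hcd : c ≠ d)
    (hne : mkE a b hab ≠ mkE c d hcd) {w : Fin n} (hw1 : w ∈ s(a,b)) (hw2 : w ∈ s(c,d)) :
    (LG n).Adj (mkE a b hab) (mkE c d hcd) :=
  lg_adj.mpr ⟨hne, ⟨w, hw1, hw2⟩⟩

lemma mv1 (hzo : z ≠ o) (hzi : z ≠ i) (hoi : o ≠ i) :
    LegalMove (LG n) (SB z o) (CC1 z o i hoi hzi) := by
  refine ⟨mkE z i hzi, mem_SB_zi hzo hzi hoi, mkE o i hoi, notmem_SB_oi hzo hzi hoi, ?_, rfl,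
    gpCC1 hzo hzi hoi⟩
  refine adjE hzi hoi (mkE_ne hzi hoi ?_) (Sym2.mem_mk_right z i) (Sym2.mem_mk_right o i)
  rintro (⟨h1, -⟩ | ⟨h1, -⟩)
  · exact hzo h1
  · exact hzi h1

lemma mv2 (hzo : z ≠ o) (hzi : z ≠ i) (hzj : z ≠ j) (hoi : o ≠ i) (hoj : o ≠ j)
    (hij : i ≠ j) (hji : j ≠ i) :
    LegalMove (LG n) (CC1 z o i hoi hzi) (CC2 z o i j hoi hzi hij hzj) := by
  refine ⟨mkE z j hzj, mem_CC1_zj hzo hzi hzj hoi hoj hji, mkE i j hij,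
    notmem_CC1_ij hzi hzj hoi hoj hij, ?_, rfl, gpCC2 hzo hzi hzj hoi hij⟩
  refine adjE hzj hij (mkE_ne hzj hij ?_) (Sym2.mem_mk_right z j) (Sym2.mem_mk_right i j)
  rintro (⟨h1, -⟩ | ⟨-, h1⟩)
  · exact hzi h1
  · exact hji h1

lemma mv3 (hzo : z ≠ o) (hzi : z ≠ i) (hzj : z ≠ j) (hoi : o ≠ i) (hoj : o ≠ j)
    (hij : i ≠ j) (hji : j ≠ i) :
    LegalMove (LG n) (CC2 z o i j hoi hzi hij hzj) (CC1 z o i hoi hzi) := by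
  have hne : mkE i j hij ≠ mkE z j hzj := by
    refine mkE_ne hij hzj ?_
    rintro (⟨h1, -⟩ | ⟨h1, -⟩)
    · exact hzi h1.symm
    · exact hij h1
  refine ⟨mkE i j hij, mem_insert_self _ _, mkE z j hzj, ?_, ?_, ?_, gpCC1 hzo hzi hoi⟩
  · rw [CC2, mem_insert]
    rintro (h | h)
    · exact hne h.symm
    · exact (mem_erase.mp h).1 rfl
  · exact adjE hij hzj hne (Sym2.mem_mk_right i j) (Sym2.mem_mk_right z j)
  · exact (insert_erase_rev (mem_CC1_zj hzo hzi hzj hoi hoj hji)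
      (notmem_CC1_ij hzi hzj hoi hoj hij) hne).symm

lemma mv4 (hzo : z ≠ o) (hzi : z ≠ i) (hoi : o ≠ i) :
    LegalMove (LG n) (CC1 z o i hoi hzi) (SB z o) := by
  have hne : mkE o i hoi ≠ mkE z i hzi := by
    refine mkE_ne hoi hzi ?_
    rintro (⟨h1, -⟩ | ⟨-, h1⟩)
    · exact hzo h1.symm
    · exact hzi h1.symm
  refine ⟨mkE o i hoi, mem_CC1_oi hzi hoi, mkE z i hzi, notmem_CC1_zi hzo hzi hoi, ?_, ?_, gpSB⟩
  · exact adjE hoi hzi hne (Sym2.mem_mk_right o i) (Sym2.mem_mk_right z i)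
  · exact (insert_erase_rev (mem_SB_zi hzo hzi hoi) (notmem_SB_oi hzo hzi hoi) hne).symm

lemma mv5 (hzo : z ≠ o) (hzi : z ≠ i) (hoi : o ≠ i) :
    LegalMove (LG n) (CC1 z o i hoi hzi) (CC3 z o i hzo hoi hzi) := by
  refine ⟨mkE o i hoi, mem_CC1_oi hzi hoi, mkE z o hzo, notmem_CC1_zo hzo hzi hoi, ?_, rfl,
    gpCC3 hzo hzi hoi⟩
  refine adjE hoi hzo (mkE_ne hoi hzo ?_) (Sym2.mem_mk_left o i) (Sym2.mem_mk_right z o)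
  rintro (⟨h1, -⟩ | ⟨h1, h2⟩)
  · exact hzo h1.symm
  · exact hzi h2.symm

lemma mv6 (hzo : z ≠ o) (hzi : z ≠ i) (hoi : o ≠ i) :
    LegalMove (LG n) (CC3 z o i hzo hoi hzi) (CC1 z o i hoi hzi) := by
  have hne : mkE z o hzo ≠ mkE o i hoi := by
    refine mkE_ne hzo hoi ?_
    rintro (⟨h1, -⟩ | ⟨h1, -⟩)
    · exact hzo h1
    · exact hzi h1
  refine ⟨mkE z o hzo, mem_insert_self _ _, mkE o i hoi, ?_, ?_, ?_, gpCC1 hzo hzi hoi⟩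
  · rw [CC3, mem_insert]
    rintro (h | h)
    · exact hne h.symm
    · exact (mem_erase.mp h).1 rfl
  · exact adjE hzo hoi hne (Sym2.mem_mk_right z o) (Sym2.mem_mk_left o i)
  · exact (insert_erase_rev (mem_CC1_oi hzi hoi) (notmem_CC1_zo hzo hzi hoi) hne).symm

end Moves

theorem lower (hn : 4 ≤ n) :
    ∃ S : Finset (EV n), IsMobileGPSet (LG n) S ∧ S.card = n - 2 := by
  set z : Fin n := ⟨0, by omega⟩ with hzdef
  set o : Fin n := ⟨1, by omega⟩ with hodef
  set a2 : Fin n := ⟨2, by omega⟩ with ha2def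
  have hzo : z ≠ o := by simp [hzdef, hodef]
  have hza : z ≠ a2 := by simp [hzdef, ha2def]
  have hoa : o ≠ a2 := by simp [hodef, ha2def]
  refine ⟨SB z o, ?_, ?_⟩
  · apply tours_cover gpSB
    intro w
    by_cases hz : z ∈ (w.1 : Sym2 (Fin n)) <;> by_cases ho : o ∈ (w.1 : Sym2 (Fin n))
    · -- w = s(z, o) : tour through CC3
      have hweq : w = mkE z o hzo := Subtype.ext (eq_of_two_mem hzo hz ho)
      refine ⟨4, fun k => match k with
        | 0 => SB z o
        | 1 => CC1 z o a2 hoa hza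
        | 2 => CC3 z o a2 hzo hoa hza
        | 3 => CC1 z o a2 hoa hza
        | _ => SB z o, ⟨rfl, rfl, ?_⟩, ⟨2, by omega, ?_⟩⟩
      · intro k hk
        interval_cases k
        · exact mv1 hzo hza hoa
        · exact mv5 hzo hza hoa
        · exact mv6 hzo hza hoa
        · exact mv4 hzo hza hoa
      · rw [hweq]
        exact mem_insert_self _ _
    · -- w ∈ SB
      exact ⟨0, fun _ => SB z o, ⟨rfl, rfl, fun k hk => absurd hk (by omega)⟩,
        ⟨0, le_refl _, mem_SB.mpr ⟨hz, ho⟩⟩⟩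
    · -- w = s(o, i)
      obtain ⟨i, hio, hwe⟩ := other_rep ho
      have hzi : z ≠ i := by
        rintro rfl
        exact hz (by rw [hwe]; simp)
      have hoi : o ≠ i := Ne.symm hio
      have hweq : w = mkE o i hoi := Subtype.ext hwe
      refine ⟨2, fun k => match k with
        | 0 => SB z o
        | 1 => CC1 z o i hoi hzi
        | _ => SB z o, ⟨rfl, rfl, ?_⟩, ⟨1, by omega, ?_⟩⟩
      · intro k hk
        interval_cases k
        · exact mv1 hzo hzi hoi
        · exact mv4 hzo hzi hoi
      · rw [hweq]
        exact mem_insert_self _ _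
    · -- w = s(p, q) away from z, o
      obtain ⟨p, q, hpq, hwe⟩ := ev_rep w
      have hzp : z ≠ p := by rintro rfl; exact hz (by rw [hwe]; simp)
      have hzq : z ≠ q := by rintro rfl; exact hz (by rw [hwe]; simp)
      have hop : o ≠ p := by rintro rfl; exact ho (by rw [hwe]; simp)
      have hoq : o ≠ q := by rintro rfl; exact ho (by rw [hwe]; simp)
      have hweq : w = mkE p q hpq := Subtype.ext hwe
      refine ⟨4, fun k => match k with
        | 0 => SB z o
        | 1 => CC1 z o p hop hzp
        | 2 => CC2 z o p q hop hzp hpq hzq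
        | 3 => CC1 z o p hop hzp
        | _ => SB z o, ⟨rfl, rfl, ?_⟩, ⟨2, by omega, ?_⟩⟩
      · intro k hk
        interval_cases k
        · exact mv1 hzo hzp hop
        · exact mv2 hzo hzp hzq hop hoq hpq (Ne.symm hpq)
        · exact mv3 hzo hzp hzq hop hoq hpq (Ne.symm hpq)
        · exact mv4 hzo hzp hop
      · rw [hweq]
        exact mem_insert_self _ _
  · -- cardinality
    have hprf : ∀ k : Fin n, k ∈ (univ \ ({z, o} : Finset (Fin n))) → z ≠ k := by
      intro k hk h
      rw [mem_sdiff, mem_insert] at hk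
      exact hk.2 (Or.inl h.symm)
    have himg : SB z o = (univ \ ({z, o} : Finset (Fin n))).attach.image
        (fun k => mkE z k.1 (hprf k.1 k.2)) := by
      ext e
      constructor
      · intro he
        obtain ⟨hze, hoe⟩ := mem_SB.mp he
        obtain ⟨k, hkz, hev⟩ := other_rep hze
        have hkA : k ∈ univ \ ({z, o} : Finset (Fin n)) := by
          rw [mem_sdiff, mem_insert, mem_singleton]
          refine ⟨mem_univ _, ?_⟩
          rintro (rfl | rfl)
          · exact hkz rfl
          · exact hoe (by rw [hev]; simp)
        exact mem_image.mpr ⟨⟨k, hkA⟩, mem_attach _ _, Subtype.ext hev.symm⟩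
      · intro he
        obtain ⟨k, -, rfl⟩ := mem_image.mp he
        have hk := k.2
        rw [mem_sdiff, mem_insert, mem_singleton] at hk
        push_neg at hk
        exact mem_SB.mpr ⟨by simp, notmem_mk (Ne.symm hzo) (fun h => hk.2.2 h.symm)⟩
    rw [himg, card_image_of_injOn, card_attach, card_sdiff_of_subset (subset_univ _), card_univ,
      Fintype.card_fin, card_pair hzo]
    intro k1 _ k2 _ h
    have hv : s(z, k1.1) = s(z, k2.1) := congrArg Subtype.val h
    rw [Sym2.eq_iff] at hv
    rcases hv with ⟨-, h2⟩ | ⟨h1, h2⟩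
    · exact Subtype.ext h2
    · exact absurd h1 (hprf k2.1 k2.2)

end GPAux

/-- For every `n ≥ 4`, the line graph of the complete graph `Kₙ` satisfies
`mob(L(Kₙ)) = n - 2`. -/
theorem stmt16 (n : ℕ) (hn : 4 ≤ n) :
    mob ((⊤ : SimpleGraph (Fin n)).lineGraph) = n - 2 := by
  obtain ⟨S, hS, hScard⟩ := GPAux.lower hn
  apply le_antisymm
  · apply csSup_le
    · exact ⟨n - 2, S, hS, hScard⟩
    · rintro k ⟨S', hS', rfl⟩
      exact GPAux.upper hn hS'
  · apply le_csSup
    · refine ⟨n - 2, ?_⟩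
      rintro k ⟨S', hS', rfl⟩
      exact GPAux.upper hn hS'
    · exact ⟨S, hS, hScard⟩
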